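/- arXiv:1107.2631 — 2 statements merged into one kernel-verified Lean document; each statement's English description precedes it below -/
import Mathlib

section
/- Let A be an abelian length category with Gabriel-Roiter measure μ. If X, Y are indecomposable with μ(X) < μ(Y), then there exist indecomposable subobjects Y' ⊂ Y'' ⊆ Y such that Y' is a Gabriel-Roiter predecessor of Y'', μ(Y') ≤ μ(X) < μ(Y''), and ℓ(Y') ≤ ℓ(X). -/
open CategoryTheory CategoryTheory.Limits

/-- The lexicographic order on finite subsets of ℕ:
`X ≤ Y` iff `min (Y \ X) ≤ min (X \ Y)`, with `min ∅ = ⊤`. -/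
def lexLE (X Y : Finset ℕ) : Prop :=
  (Y \ X).min ≤ (X \ Y).min

/-- Strict lexicographic order. -/
def lexLT (X Y : Finset ℕ) : Prop :=
  lexLE X Y ∧ ¬ lexLE Y X

variable {C : Type*} [Category C] [Abelian C]

/-- `n` is the composition length of the object `X`: there is a maximal
strictly increasing chain of subobjects of `X` from `⊥` to `⊤` with `n`
steps, and every strictly increasing chain of subobjects has at most
`n` steps. -/
def ObjLength (X : C) (n : ℕ) : Prop :=
  (∃ f : Fin (n + 1) → Subobject X, StrictMono f ∧ f 0 = ⊥ ∧ f (Fin.last n) = ⊤) ∧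
  ∀ (m : ℕ) (f : Fin (m + 1) → Subobject X), StrictMono f → m ≤ n

/-- `A` is the set of lengths of a finite chain of indecomposable subobjects
of `X` ending in `X` itself. -/
def IsGRChainVal (len : C → ℕ) (X : C) (A : Finset ℕ) : Prop :=
  ∃ s : Finset (Subobject X),
    IsChain (· ≤ ·) (s : Set (Subobject X)) ∧
    (⊤ : Subobject X) ∈ s ∧
    (∀ t ∈ s, Indecomposable ((t : Subobject X) : C)) ∧
    s.image (fun t : Subobject X => len ((t : Subobject X) : C)) = A

/-- `mu` is the Gabriel-Roiter measure associated to the length function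
`len`: for each indecomposable `X`, `mu X` is the lexicographic maximum of
the sets of lengths along chains of indecomposable subobjects of `X`. -/
def IsGRMeasure (len : C → ℕ) (mu : C → Finset ℕ) : Prop :=
  ∀ X : C, Indecomposable X →
    IsGRChainVal len X (mu X) ∧
    ∀ A : Finset ℕ, IsGRChainVal len X A → lexLE A (mu X)

/-- `X` is a Gabriel-Roiter predecessor of `Y`: both are indecomposable,
`X` is a proper subobject of `Y`, and `mu X` attains the maximum of the
Gabriel-Roiter measures of the proper indecomposable subobjects of `Y`. -/
def IsGRPred (mu : C → Finset ℕ) (X Y : C) : Prop :=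
  Indecomposable X ∧ Indecomposable Y ∧
  (∃ f : X ⟶ Y, Mono f ∧ ¬ IsIso f) ∧
  ∀ t : Subobject Y, t ≠ ⊤ → Indecomposable ((t : Subobject Y) : C) →
    lexLE (mu ((t : Subobject Y) : C)) (mu X)

set_option linter.unusedSectionVars false

theorem lexLE_refl (A : Finset ℕ) : lexLE A A := le_refl _

theorem lexLE_total (A B : Finset ℕ) : lexLE A B ∨ lexLE B A := le_total _ _

theorem lexLE_antisymm {A B : Finset ℕ} (h1 : lexLE A B) (h2 : lexLE B A) : A = B := by
  unfold lexLE at h1 h2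
  have heq : (B \ A).min = (A \ B).min := le_antisymm h1 h2
  rcases eq_or_ne ((A \ B).min) ⊤ with htop | hne
  · have h1' : (B \ A).min = ⊤ := by rw [heq, htop]
    rw [Finset.min_eq_top] at htop h1'
    exact Finset.Subset.antisymm (Finset.sdiff_eq_empty_iff_subset.mp htop)
      (Finset.sdiff_eq_empty_iff_subset.mp h1')
  · obtain ⟨m, hm⟩ := WithTop.ne_top_iff_exists.mp hne
    have hmA : m ∈ A \ B := Finset.mem_of_min hm.symm
    have hmB : m ∈ B \ A := Finset.mem_of_min (by rw [heq, ← hm])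
    rw [Finset.mem_sdiff] at hmA hmB
    exact absurd hmB.1 hmA.2

theorem lexLE_iff (A B : Finset ℕ) :
    lexLE A B ↔ A = B ∨ ∃ m, m ∈ B ∧ m ∉ A ∧ ∀ k < m, (k ∈ A ↔ k ∈ B) := by
  constructor
  · intro h
    rcases eq_or_ne A B with rfl | hne
    · exact Or.inl rfl
    right
    have hBA : (B \ A).Nonempty := by
      rw [Finset.nonempty_iff_ne_empty]
      intro hemp
      apply hne
      unfold lexLE at h
      rw [hemp, Finset.min_empty, top_le_iff, Finset.min_eq_top] at h
      exact Finset.Subset.antisymm (Finset.sdiff_eq_empty_iff_subset.mp h)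
        (Finset.sdiff_eq_empty_iff_subset.mp hemp)
    obtain ⟨m, hm⟩ := Finset.min_of_nonempty hBA
    have hmBA : m ∈ B \ A := Finset.mem_of_min hm
    rw [Finset.mem_sdiff] at hmBA
    refine ⟨m, hmBA.1, hmBA.2, ?_⟩
    intro k hk
    constructor
    · intro hkA
      by_contra hkB
      have hk1 : (k : WithTop ℕ) < (B \ A).min := by
        rw [hm]; exact WithTop.coe_lt_coe.mpr hk
      have hk2 : (A \ B).min ≤ (k : WithTop ℕ) :=
        Finset.min_le (Finset.mem_sdiff.mpr ⟨hkA, hkB⟩)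
      exact absurd (le_trans h hk2) (not_le_of_gt hk1)
    · intro hkB
      by_contra hkA
      have : (B \ A).min ≤ (k : WithTop ℕ) :=
        Finset.min_le (Finset.mem_sdiff.mpr ⟨hkB, hkA⟩)
      rw [hm] at this
      exact absurd hk (not_lt_of_ge (WithTop.coe_le_coe.mp this))
  · rintro (rfl | ⟨m, hmB, hmA, hiff⟩)
    · exact lexLE_refl A
    unfold lexLE
    refine le_trans (Finset.min_le (Finset.mem_sdiff.mpr ⟨hmB, hmA⟩)) ?_
    apply Finset.le_min
    intro a ha
    rw [Finset.mem_sdiff] at ha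
    by_contra hlt
    push_cast at hlt
    rw [not_le] at hlt
    have hlt' : a < m := by exact_mod_cast hlt
    exact ha.2 ((hiff a hlt').mp ha.1)

theorem lexLE_trans {A B D : Finset ℕ} (h1 : lexLE A B) (h2 : lexLE B D) : lexLE A D := by
  rw [lexLE_iff] at h1 h2 ⊢
  rcases h1 with rfl | ⟨m1, hm1B, hm1A, hiff1⟩
  · exact h2
  rcases h2 with rfl | ⟨m2, hm2D, hm2B, hiff2⟩
  · exact Or.inr ⟨m1, hm1B, hm1A, hiff1⟩
  right
  rcases lt_trichotomy m1 m2 with h | rfl | h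
  · exact ⟨m1, (hiff2 m1 h).mp hm1B, hm1A,
      fun k hk => (hiff1 k hk).trans (hiff2 k (hk.trans h))⟩
  · exact ⟨m1, hm2D, hm1A, fun k hk => (hiff1 k hk).trans (hiff2 k hk)⟩
  · refine ⟨m2, hm2D, fun hc => hm2B ((hiff1 m2 h).mp hc),
      fun k hk => (hiff1 k (hk.trans h)).trans (hiff2 k hk)⟩

theorem lexLT_iff_not_lexLE {A B : Finset ℕ} : lexLT A B ↔ ¬ lexLE B A :=
  ⟨fun h => h.2, fun h => ⟨(lexLE_total A B).resolve_right h, h⟩⟩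

theorem lexLE_insert {A B : Finset ℕ} {l : ℕ} (h : lexLE A B) (hA : l ∉ A) (hB : l ∉ B) :
    lexLE (insert l A) (insert l B) := by
  have e1 : insert l B \ insert l A = B \ A := by
    ext x
    simp only [Finset.mem_sdiff, Finset.mem_insert, not_or]
    constructor
    · rintro ⟨rfl | hx1, hx2, hx3⟩
      · exact absurd rfl hx2
      · exact ⟨hx1, hx3⟩
    · rintro ⟨hx1, hx2⟩
      exact ⟨Or.inr hx1, fun hc => hB (hc ▸ hx1), hx2⟩
  have e2 : insert l A \ insert l B = A \ B := by
    ext x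
    simp only [Finset.mem_sdiff, Finset.mem_insert, not_or]
    constructor
    · rintro ⟨rfl | hx1, hx2, hx3⟩
      · exact absurd rfl hx2
      · exact ⟨hx1, hx3⟩
    · rintro ⟨hx1, hx2⟩
      exact ⟨Or.inr hx1, fun hc => hA (hc ▸ hx1), hx2⟩
  unfold lexLE
  rw [e1, e2]
  exact h

theorem lexLT_insert {A : Finset ℕ} {x : ℕ} (hx : x ∉ A) : lexLT A (insert x A) := by
  have e1 : insert x A \ A = {x} := by
    ext y
    simp only [Finset.mem_sdiff, Finset.mem_insert, Finset.mem_singleton]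
    constructor
    · rintro ⟨rfl | hy, hy2⟩
      · rfl
      · exact absurd hy hy2
    · rintro rfl; exact ⟨Or.inl rfl, hx⟩
  have e2 : A \ insert x A = ∅ := by
    rw [Finset.sdiff_eq_empty_iff_subset]
    exact Finset.subset_insert _ _
  constructor
  · unfold lexLE; rw [e1, e2, Finset.min_empty]; exact le_top
  · unfold lexLE; rw [e1, e2, Finset.min_empty, Finset.min_singleton, top_le_iff]
    simp

theorem exists_lex_max (s : Finset (Finset ℕ)) (hne : s.Nonempty) :
    ∃ A ∈ s, ∀ B ∈ s, lexLE B A := by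
  induction s using Finset.induction_on with
  | empty => exact absurd hne (by simp)
  | @insert a s ha ih =>
    rcases s.eq_empty_or_nonempty with rfl | hs
    · refine ⟨a, by simp, ?_⟩
      intro B hB
      rw [Finset.mem_insert] at hB
      rcases hB with rfl | hB
      · exact lexLE_refl B
      · exact absurd hB (by simp)
    · obtain ⟨A, hA, hmax⟩ := ih hs
      rcases lexLE_total a A with h | h
      · refine ⟨A, Finset.mem_insert_of_mem hA, ?_⟩
        intro B hB
        rcases Finset.mem_insert.mp hB with rfl | hB
        exacts [h, hmax B hB]
      · refine ⟨a, Finset.mem_insert_self _ _, ?_⟩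
        intro B hB
        rcases Finset.mem_insert.mp hB with rfl | hB
        exacts [lexLE_refl B, lexLE_trans (hmax B hB) h]

theorem lex_max_le {A B : Finset ℕ} {l M : ℕ} (hBA : lexLE B A) (hAl : lexLE A (insert l B))
    (hBl : ∀ b ∈ B, b < l) (hM : ∀ a ∈ A, a ≤ M) : ∀ b ∈ B, b ≤ M := by
  intro b0 hb0
  by_contra hc
  rw [not_le] at hc
  have hb0A : b0 ∉ A := fun h => absurd (hM _ h) (not_le.mpr hc)
  have hb0BA : b0 ∈ B \ A := Finset.mem_sdiff.mpr ⟨hb0, hb0A⟩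
  -- A \ B is nonempty with minimum m
  have hminle : (A \ B).min ≤ (b0 : WithTop ℕ) := le_trans hBA (Finset.min_le hb0BA)
  have hABne : ((A \ B).min) ≠ ⊤ := fun h => by
    rw [h, top_le_iff] at hminle
    exact WithTop.coe_ne_top hminle
  obtain ⟨m, hm⟩ := WithTop.ne_top_iff_exists.mp hABne
  have hmAB : m ∈ A \ B := Finset.mem_of_min hm.symm
  rw [Finset.mem_sdiff] at hmAB
  have hmM : m ≤ M := hM _ hmAB.1
  have hml : m < l := lt_of_le_of_lt (le_trans hmM (le_of_lt hc)) (hBl _ hb0)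
  -- every element of (insert l B) \ A is > m
  have hkey : ∀ x ∈ insert l B \ A, m < x := by
    intro x hx
    rw [Finset.mem_sdiff, Finset.mem_insert] at hx
    rcases hx.1 with rfl | hxB
    · exact hml
    · have h1 : (m : WithTop ℕ) ≤ (x : WithTop ℕ) :=
        le_trans (le_of_eq hm)
          (le_trans hBA (Finset.min_le (Finset.mem_sdiff.mpr ⟨hxB, hx.2⟩)))
      have h2 : m ≤ x := WithTop.coe_le_coe.mp h1
      rcases lt_or_eq_of_le h2 with h | h
      · exact h
      · exact absurd (h ▸ hxB) hmAB.2
  -- m ∈ A \ insert l B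
  have hmmem : m ∈ A \ insert l B := by
    rw [Finset.mem_sdiff, Finset.mem_insert]
    exact ⟨hmAB.1, fun h => h.elim (fun h => absurd h (ne_of_lt hml)) hmAB.2⟩
  have h1 : (insert l B \ A).min ≤ (m : WithTop ℕ) := le_trans hAl (Finset.min_le hmmem)
  have h2 : (m : WithTop ℕ) < (insert l B \ A).min := by
    rcases Finset.eq_empty_or_nonempty (insert l B \ A) with he | hne
    · rw [he, Finset.min_empty]; exact WithTop.coe_lt_top m
    · obtain ⟨m', hm'⟩ := Finset.min_of_nonempty hne
      rw [hm']
      exact WithTop.coe_lt_coe.mpr (hkey m' (Finset.mem_of_min hm'))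
  exact absurd h1 (not_le_of_gt h2)

section Helpers

theorem strictMono_snoc {n : ℕ} {α : Type*} [Preorder α] (f : Fin (n + 1) → α)
    (hf : StrictMono f) (a : α) (ha : ∀ i, f i < a) :
    StrictMono (Fin.snoc f a : Fin (n + 2) → α) := by
  intro i j hij
  rcases eq_or_ne j (Fin.last (n + 1)) with rfl | hj
  · have hi : i ≠ Fin.last (n + 1) := ne_of_lt hij
    obtain ⟨i', rfl⟩ := Fin.exists_castSucc_eq.mpr hi
    rw [Fin.snoc_castSucc, Fin.snoc_last]
    exact ha i'
  · obtain ⟨j', rfl⟩ := Fin.exists_castSucc_eq.mpr hj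
    have hi : i ≠ Fin.last (n + 1) :=
      ne_of_lt (lt_of_lt_of_le hij (Fin.le_last _))
    obtain ⟨i', rfl⟩ := Fin.exists_castSucc_eq.mpr hi
    rw [Fin.snoc_castSucc, Fin.snoc_castSucc]
    exact hf (by exact_mod_cast hij)

/-- Pushforward of a subobject along a mono. -/
noncomputable def pushSub {A B : C} (f : A ⟶ B) [Mono f] (s : Subobject A) : Subobject B :=
  Subobject.mk (s.arrow ≫ f)

theorem pushSub_le_pushSub {A B : C} (f : A ⟶ B) [Mono f] {s t : Subobject A} (h : s ≤ t) :
    pushSub f s ≤ pushSub f t :=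
  Subobject.mk_le_mk_of_comm (Subobject.ofLE s t h)
    (by rw [← Category.assoc, Subobject.ofLE_arrow])

theorem le_of_pushSub_le {A B : C} (f : A ⟶ B) [Mono f] {s t : Subobject A}
    (h : pushSub f s ≤ pushSub f t) : s ≤ t := by
  refine Subobject.le_of_comm (Subobject.ofMkLEMk _ _ h) ?_
  rw [← cancel_mono f, Category.assoc]
  exact Subobject.ofMkLEMk_comp h

theorem pushSub_strictMono {A B : C} (f : A ⟶ B) [Mono f] {s t : Subobject A} (h : s < t) :
    pushSub f s < pushSub f t :=
  lt_of_le_not_ge (pushSub_le_pushSub f h.le) (fun hc => h.not_ge (le_of_pushSub_le f hc))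

theorem pushSub_inj {A B : C} (f : A ⟶ B) [Mono f] {s t : Subobject A}
    (h : pushSub f s = pushSub f t) : s = t :=
  le_antisymm (le_of_pushSub_le f h.le) (le_of_pushSub_le f h.ge)

/-- The underlying object of a pushforward is isomorphic to the original one. -/
noncomputable def pushSubIso {A B : C} (f : A ⟶ B) [Mono f] (s : Subobject A) :
    ((pushSub f s : Subobject B) : C) ≅ (s : C) :=
  Subobject.underlyingIso _

theorem pushSub_top {A B : C} (f : A ⟶ B) [Mono f] : pushSub f ⊤ = Subobject.mk f :=
  Subobject.mk_eq_mk_of_comm _ f (asIso (Subobject.arrow ⊤)) rfl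

theorem pushSub_top_of_isIso {A B : C} (f : A ⟶ B) [IsIso f] : pushSub f ⊤ = ⊤ := by
  rw [pushSub_top]
  exact Subobject.mk_eq_top_of_isIso f

theorem pushSub_bot {A B : C} (f : A ⟶ B) [Mono f] : pushSub f ⊥ = ⊥ := by
  apply Subobject.mk_eq_bot_iff_zero.mpr
  rw [Subobject.bot_arrow, zero_comp]

theorem indec_of_iso {A B : C} (e : A ≅ B) (h : Indecomposable A) : Indecomposable B :=
  ⟨fun hz => h.1 (hz.of_iso e), fun U V e' => h.2 U V (e ≪≫ e')⟩

theorem isZero_of_bot_eq_top {Z : C} (h : (⊥ : Subobject Z) = ⊤) : IsZero Z := by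
  have harr : (⊤ : Subobject Z).arrow = 0 := by
    rw [← h, Subobject.bot_arrow]
  have htop : IsZero (((⊤ : Subobject Z) : Subobject Z) : C) := by
    rw [IsZero.iff_id_eq_zero, ← cancel_mono (⊤ : Subobject Z).arrow, Category.id_comp, harr, zero_comp]
  exact htop.of_iso (asIso (⊤ : Subobject Z).arrow).symm

theorem subobject_eq_of_isZero {Z : C} (hz : IsZero Z) (u v : Subobject Z) : u = v := by
  have key : ∀ a b : Subobject Z, a ≤ b := by
    intro a b
    refine Subobject.le_of_comm 0 ?_
    rw [zero_comp]
    exact hz.eq_of_tgt _ _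
  exact le_antisymm (key u v) (key v u)

theorem objLength_unique {Z : C} {n m : ℕ} (h1 : ObjLength Z n) (h2 : ObjLength Z m) : n = m := by
  obtain ⟨⟨f, hf, _, _⟩, h1b⟩ := h1
  obtain ⟨⟨g, hg, _, _⟩, h2b⟩ := h2
  exact le_antisymm (h2b n f hf) (h1b m g hg)

theorem objLength_of_iso {A B : C} (e : A ≅ B) {n : ℕ} (h : ObjLength A n) : ObjLength B n := by
  obtain ⟨⟨f, hf, hf0, hfl⟩, hb⟩ := h
  constructor
  · refine ⟨fun i => pushSub e.hom (f i), fun i j hij => pushSub_strictMono e.hom (hf hij),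
      ?_, ?_⟩
    · show pushSub e.hom (f 0) = ⊥
      rw [hf0, pushSub_bot]
    · show pushSub e.hom (f (Fin.last n)) = ⊤
      rw [hfl, pushSub_top_of_isIso]
  · intro m g hg
    exact hb m (fun i => pushSub e.inv (g i)) (fun i j hij => pushSub_strictMono e.inv (hg hij))

end Helpers

section LenFacts

variable (len : C → ℕ) (hlen : ∀ Z : C, ObjLength Z (len Z))
include hlen

theorem len_iso {A B : C} (e : A ≅ B) : len A = len B :=
  objLength_unique (objLength_of_iso e (hlen A)) (hlen B)

theorem isZero_of_len_zero {Z : C} (h : len Z = 0) : IsZero Z := by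
  obtain ⟨⟨f, hf, hf0, hfl⟩, _⟩ := hlen Z
  have hlast : Fin.last (len Z) = 0 := Fin.ext (by simp [h])
  rw [hlast, hf0] at hfl
  exact isZero_of_bot_eq_top hfl

theorem one_le_len_of_indec {Z : C} (h : Indecomposable Z) : 1 ≤ len Z :=
  Nat.pos_of_ne_zero (fun hc => h.1 (isZero_of_len_zero len hlen hc))

theorem len_sub_le {Y : C} (t : Subobject Y) : len ((t : Subobject Y) : C) ≤ len Y := by
  obtain ⟨⟨f, hf, _, _⟩, _⟩ := hlen ((t : Subobject Y) : C)
  exact (hlen Y).2 _ (fun i => pushSub t.arrow (f i))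
    (fun i j hij => pushSub_strictMono t.arrow (hf hij))

theorem len_sub_lt {Y : C} (t : Subobject Y) (ht : t ≠ ⊤) :
    len ((t : Subobject Y) : C) < len Y := by
  obtain ⟨⟨f, hf, _, hfl⟩, _⟩ := hlen ((t : Subobject Y) : C)
  have hchain : StrictMono (Fin.snoc (fun i => pushSub t.arrow (f i)) ⊤ :
      Fin (len ((t : Subobject Y) : C) + 2) → Subobject Y) := by
    apply strictMono_snoc _ (fun i j hij => pushSub_strictMono t.arrow (hf hij))
    intro i
    have h1 : pushSub t.arrow (f i) ≤ pushSub t.arrow ⊤ := pushSub_le_pushSub _ le_top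
    have h2 : pushSub t.arrow ⊤ = t := by rw [pushSub_top, Subobject.mk_arrow]
    exact lt_of_le_of_lt (h1.trans h2.le) (lt_of_le_of_ne le_top ht)
  have := (hlen Y).2 _ _ hchain
  omega

theorem bot_of_len_zero {Y : C} (t : Subobject Y) (h : len ((t : Subobject Y) : C) = 0) :
    t = ⊥ := by
  have hz : IsZero ((t : Subobject Y) : C) := isZero_of_len_zero len hlen h
  have : t.arrow = 0 := hz.eq_of_src _ _
  rw [← Subobject.mk_arrow t, Subobject.mk_eq_bot_iff_zero.mpr this]

end LenFacts

section LenFacts2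

variable (len : C → ℕ) (hlen : ∀ Z : C, ObjLength Z (len Z))
include hlen

theorem sub_eq_bot_or_top {W : C} (hW : len W = 1) (t : Subobject W) : t = ⊥ ∨ t = ⊤ := by
  by_contra hc
  push_neg at hc
  have hlt : len ((t : Subobject W) : C) < 1 := hW ▸ len_sub_lt len hlen t hc.2
  exact hc.1 (bot_of_len_zero len hlen t (by omega))

theorem indec_of_len_one {W : C} (hW : len W = 1) : Indecomposable W := by
  constructor
  · intro hz
    have hall : ∀ u v : Subobject W, u = v := subobject_eq_of_isZero hz
    have h0 : ObjLength W 0 := by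
      constructor
      · refine ⟨fun _ => ⊥, ?_, rfl, hall _ _⟩
        intro i j hij
        rw [Fin.lt_def] at hij
        have hi := i.isLt
        have hj := j.isLt
        omega
      · intro m f hf
        by_contra hm
        push_neg at hm
        have h01 : (⟨0, by omega⟩ : Fin (m + 1)) < ⟨1, by omega⟩ :=
          Fin.mk_lt_mk.mpr (by omega)
        have := hf h01
        rw [hall (f ⟨0, by omega⟩) (f ⟨1, by omega⟩)] at this
        exact absurd this (lt_irrefl _)
    have := objLength_unique h0 (hlen W)
    omega
  · intro U V e
    haveI hmono : IsSplitMono (biprod.inl ≫ e.inv : U ⟶ W) :=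
      IsSplitMono.mk' ⟨e.hom ≫ biprod.fst, by simp⟩
    rcases sub_eq_bot_or_top len hlen hW (Subobject.mk (biprod.inl ≫ e.inv)) with h | h
    · left
      have h0 : (biprod.inl ≫ e.inv : U ⟶ W) = 0 := Subobject.mk_eq_bot_iff_zero.mp h
      have hinl : (biprod.inl : U ⟶ U ⊞ V) = 0 := by
        have := congrArg (fun g => g ≫ e.hom) h0
        simpa using this
      rw [IsZero.iff_id_eq_zero, ← biprod.inl_fst (X := U) (Y := V), hinl, zero_comp]
    · right
      haveI hiso : IsIso (biprod.inl ≫ e.inv : U ⟶ W) := (Subobject.isIso_iff_mk_eq_top _).mpr h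
      haveI hinl : IsIso (biprod.inl : U ⟶ U ⊞ V) := by
        have heq : (biprod.inl : U ⟶ U ⊞ V) = (biprod.inl ≫ e.inv) ≫ e.hom := by simp
        rw [heq]; infer_instance
      have hk : (biprod.desc (0 : U ⟶ V) (𝟙 V) : U ⊞ V ⟶ V) = 0 := by
        rw [← cancel_epi (biprod.inl : U ⟶ U ⊞ V)]
        simp
      rw [IsZero.iff_id_eq_zero, ← biprod.inr_desc (0 : U ⟶ V) (𝟙 V), hk, comp_zero]

theorem exists_len_one_sub : ∀ n, ∀ Z : C, len Z = n → 1 ≤ n →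
    ∃ t : Subobject Z, len ((t : Subobject Z) : C) = 1 := by
  intro n
  induction n using Nat.strong_induction_on with
  | _ n ih =>
    intro Z hZ hn
    rcases eq_or_lt_of_le hn with h1 | h2
    · refine ⟨⊤, ?_⟩
      rw [len_iso len hlen (asIso (⊤ : Subobject Z).arrow), hZ, ← h1]
    · obtain ⟨⟨f, hf, hf0, hfl⟩, _⟩ := hlen Z
      have hlt1 : 1 < len Z + 1 := by omega
      set t := f ⟨1, hlt1⟩ with ht
      have htop : t ≠ ⊤ := by
        intro hc
        have h01 : (⟨1, hlt1⟩ : Fin (len Z + 1)) < Fin.last (len Z) := by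
          rw [Fin.lt_def]
          show 1 < len Z
          omega
        have hlt := hf h01
        rw [← ht, hc, hfl] at hlt
        exact absurd hlt (lt_irrefl _)
      have hbot : t ≠ ⊥ := by
        intro hc
        have h01 : (0 : Fin (len Z + 1)) < ⟨1, hlt1⟩ := by
          rw [Fin.lt_def]
          show 0 < 1
          omega
        have hlt := hf h01
        rw [← ht, hc, hf0] at hlt
        exact absurd hlt (lt_irrefl _)
      have hltn : len ((t : Subobject Z) : C) < n := hZ ▸ len_sub_lt len hlen t htop
      have hge : 1 ≤ len ((t : Subobject Z) : C) := by
        by_contra h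
        push_neg at h
        exact hbot (bot_of_len_zero len hlen t (by omega))
      obtain ⟨s, hs⟩ := ih _ hltn ((t : Subobject Z) : C) rfl hge
      refine ⟨pushSub t.arrow s, ?_⟩
      rw [len_iso len hlen (pushSubIso t.arrow s)]
      exact hs

theorem chainval_mem_len {Z : C} {A : Finset ℕ} (h : IsGRChainVal len Z A) : len Z ∈ A := by
  obtain ⟨s, _, htop, _, himg⟩ := h
  rw [← himg, ← len_iso len hlen (asIso (⊤ : Subobject Z).arrow)]
  exact Finset.mem_image_of_mem _ htop

theorem chainval_bounds {Z : C} {A : Finset ℕ} (h : IsGRChainVal len Z A) :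
    ∀ a ∈ A, 1 ≤ a ∧ a ≤ len Z := by
  obtain ⟨s, _, _, hindec, himg⟩ := h
  intro a ha
  rw [← himg] at ha
  obtain ⟨t, hts, rfl⟩ := Finset.mem_image.mp ha
  exact ⟨one_le_len_of_indec len hlen (hindec t hts), len_sub_le len hlen t⟩

theorem chainval_of_iso {A B : C} (e : A ≅ B) {S : Finset ℕ}
    (h : IsGRChainVal len A S) : IsGRChainVal len B S := by
  classical
  obtain ⟨s, hchain, htop, hindec, himg⟩ := h
  refine ⟨s.image (pushSub e.hom), ?_, ?_, ?_, ?_⟩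
  · rw [Finset.coe_image]
    exact IsChain.image_of_map_rel _ _ _ (fun u v huv => pushSub_le_pushSub e.hom huv) hchain
  · rw [Finset.mem_image]
    exact ⟨⊤, htop, pushSub_top_of_isIso e.hom⟩
  · intro t ht
    obtain ⟨u, hu, rfl⟩ := Finset.mem_image.mp ht
    exact indec_of_iso (pushSubIso e.hom u).symm (hindec u hu)
  · rw [Finset.image_image, ← himg]
    exact Finset.image_congr (fun u _ => len_iso len hlen (pushSubIso e.hom u))

theorem mu_iso (mu : C → Finset ℕ) (hmu : IsGRMeasure len mu) {A B : C} (e : A ≅ B)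
    (hA : Indecomposable A) : mu A = mu B := by
  have hB : Indecomposable B := indec_of_iso e hA
  apply lexLE_antisymm
  · exact (hmu B hB).2 _ (chainval_of_iso len hlen e (hmu A hA).1)
  · exact (hmu A hA).2 _ (chainval_of_iso len hlen e.symm (hmu B hB).1)

theorem chainval_push {Y : C} (hY : Indecomposable Y) (t : Subobject Y) {A : Finset ℕ}
    (h : IsGRChainVal len ((t : Subobject Y) : C) A) :
    IsGRChainVal len Y (insert (len Y) A) := by
  classical
  obtain ⟨s, hchain, htop, hindec, himg⟩ := h
  refine ⟨insert ⊤ (s.image (pushSub t.arrow)), ?_, Finset.mem_insert_self _ _, ?_, ?_⟩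
  · rw [Finset.coe_insert, Finset.coe_image]
    apply IsChain.insert
    · exact IsChain.image_of_map_rel _ _ _ (fun u v huv => pushSub_le_pushSub t.arrow huv) hchain
    · intro b _ _
      exact Or.inr le_top
  · intro u hu
    rcases Finset.mem_insert.mp hu with rfl | hu
    · exact indec_of_iso (asIso (⊤ : Subobject Y).arrow).symm hY
    · obtain ⟨v, hv, rfl⟩ := Finset.mem_image.mp hu
      exact indec_of_iso (pushSubIso t.arrow v).symm (hindec v hv)
  · rw [Finset.image_insert, Finset.image_image]
    congr 1
    · exact len_iso len hlen (asIso (⊤ : Subobject Y).arrow)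
    · rw [← himg]
      exact Finset.image_congr (fun u _ => len_iso len hlen (pushSubIso t.arrow u))

end LenFacts2

theorem exists_chain_max {α : Type*} [Preorder α] :
    ∀ s : Finset α, IsChain (· ≤ ·) (s : Set α) → s.Nonempty → ∃ t ∈ s, ∀ u ∈ s, u ≤ t := by
  classical
  intro s
  induction s using Finset.induction_on with
  | empty => intro _ hne; exact absurd hne (by simp)
  | @insert a s ha ih =>
    intro hchain _
    rcases s.eq_empty_or_nonempty with rfl | hs
    · refine ⟨a, by simp, ?_⟩
      intro u hu
      rcases Finset.mem_insert.mp hu with rfl | hu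
      · exact le_rfl
      · exact absurd hu (by simp)
    · have hchain' : IsChain (· ≤ ·) (s : Set α) :=
        hchain.mono (by rw [Finset.coe_insert]; exact Set.subset_insert _ _)
      obtain ⟨t, hts, hmax⟩ := ih hchain' hs
      have hat : a ≤ t ∨ t ≤ a := by
        rcases eq_or_ne a t with rfl | hne'
        · exact Or.inl le_rfl
        · exact hchain (by simp) (by simp [hts]) hne'
      rcases hat with h | h
      · refine ⟨t, Finset.mem_insert_of_mem hts, ?_⟩
        intro u hu
        rcases Finset.mem_insert.mp hu with rfl | hu
        exacts [h, hmax u hu]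
      · refine ⟨a, Finset.mem_insert_self _ _, ?_⟩
        intro u hu
        rcases Finset.mem_insert.mp hu with rfl | hu
        exacts [le_rfl, (hmax u hu).trans h]

/-- Restriction of a subobject `u ≤ t` of `Y` to a subobject of `t`. -/
noncomputable def pullSub {Y : C} (t u : Subobject Y) : Subobject ((t : Subobject Y) : C) :=
  letI := Classical.dec (u ≤ t)
  if h : u ≤ t then Subobject.mk (Subobject.ofLE u t h) else ⊤

theorem pullSub_of_le {Y : C} {t u : Subobject Y} (h : u ≤ t) :
    pullSub t u = Subobject.mk (Subobject.ofLE u t h) := by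
  unfold pullSub
  exact dif_pos h

noncomputable def pullSubIso {Y : C} (t u : Subobject Y) (h : u ≤ t) :
    ((pullSub t u : Subobject ((t : Subobject Y) : C)) : C) ≅ ((u : Subobject Y) : C) :=
  Subobject.underlying.mapIso (eqToIso (pullSub_of_le h)) ≪≫ Subobject.underlyingIso _

theorem pullSub_self {Y : C} (t : Subobject Y) : pullSub t t = ⊤ := by
  rw [pullSub_of_le le_rfl]
  haveI : IsIso (Subobject.ofLE t t le_rfl) := by
    rw [Subobject.ofLE_refl]
    infer_instance
  exact Subobject.mk_eq_top_of_isIso _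

theorem pullSub_le_pullSub {Y : C} {t u v : Subobject Y} (huv : u ≤ v) (hvt : v ≤ t) :
    pullSub t u ≤ pullSub t v := by
  rw [pullSub_of_le (huv.trans hvt), pullSub_of_le hvt]
  exact Subobject.mk_le_mk_of_comm (Subobject.ofLE u v huv) (Subobject.ofLE_comp_ofLE _ _ _ _ _)

section LenFacts3

variable (len : C → ℕ) (hlen : ∀ Z : C, ObjLength Z (len Z))
include hlen

theorem chainval_restrict {Y : C} {s : Finset (Subobject Y)}
    (hchain : IsChain (· ≤ ·) (s : Set (Subobject Y)))
    (hindec : ∀ u ∈ s, Indecomposable ((u : Subobject Y) : C))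
    {t : Subobject Y} (hts : t ∈ s) (hmax : ∀ u ∈ s, u ≤ t) :
    IsGRChainVal len ((t : Subobject Y) : C)
      (s.image (fun u : Subobject Y => len ((u : Subobject Y) : C))) := by
  classical
  refine ⟨s.image (pullSub t), ?_, ?_, ?_, ?_⟩
  · rw [Finset.coe_image]
    rintro x ⟨u, hu, rfl⟩ y ⟨v, hv, rfl⟩ hxy
    have hu' : u ∈ s := hu
    have hv' : v ∈ s := hv
    rcases eq_or_ne u v with rfl | huv
    · exact absurd rfl hxy
    · rcases hchain hu hv huv with h | h
      · exact Or.inl (pullSub_le_pullSub h (hmax v hv'))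
      · exact Or.inr (pullSub_le_pullSub h (hmax u hu'))
  · rw [Finset.mem_image]
    exact ⟨t, hts, pullSub_self t⟩
  · intro v hv
    obtain ⟨u, hu, rfl⟩ := Finset.mem_image.mp hv
    exact indec_of_iso (pullSubIso t u (hmax u hu)).symm (hindec u hu)
  · rw [Finset.image_image]
    exact Finset.image_congr
      (fun u hu => len_iso len hlen (pullSubIso t u (hmax u (Finset.mem_coe.mp hu))))

variable (mu : C → Finset ℕ) (hmu : IsGRMeasure len mu)
include hmu

theorem one_mem_mu {X : C} (hX : Indecomposable X) : 1 ∈ mu X := by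
  classical
  obtain ⟨t, ht⟩ := exists_len_one_sub len hlen (len X) X rfl (one_le_len_of_indec len hlen hX)
  -- the chain {t, ⊤} gives the chain value {1, len X}
  have hval : IsGRChainVal len X (insert (len ((t : Subobject X) : C)) {len X}) := by
    refine ⟨insert t {⊤}, ?_, ?_, ?_, ?_⟩
    · rintro x hx y hy hxy
      simp only [Finset.coe_insert, Set.mem_insert_iff, Finset.coe_singleton,
        Set.mem_singleton_iff] at hx hy
      rcases hx with rfl | rfl <;> rcases hy with rfl | rfl
      · exact absurd rfl hxy
      · exact Or.inl le_top
      · exact Or.inr le_top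
      · exact absurd rfl hxy
    · simp
    · intro u hu
      rcases Finset.mem_insert.mp hu with rfl | hu
      · exact indec_of_len_one len hlen ht
      · rw [Finset.mem_singleton] at hu
        subst hu
        exact indec_of_iso (asIso (⊤ : Subobject X).arrow).symm hX
    · rw [Finset.image_insert, Finset.image_singleton]
      congr 1
      congr 1
      exact len_iso len hlen (asIso (⊤ : Subobject X).arrow)
  rw [ht] at hval
  have hle : lexLE (insert 1 {len X}) (mu X) := (hmu X hX).2 _ hval
  by_contra hmem
  have h1 : (1 : ℕ) ∈ insert 1 ({len X} : Finset ℕ) \ mu X := by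
    rw [Finset.mem_sdiff]
    exact ⟨Finset.mem_insert_self _ _, hmem⟩
  have h2 : (mu X \ insert 1 {len X}).min ≤ (1 : ℕ) := le_trans hle (Finset.min_le h1)
  have hne : (mu X \ insert 1 {len X}).min ≠ ⊤ := fun hc => by
    rw [hc, top_le_iff] at h2
    exact WithTop.coe_ne_top h2
  obtain ⟨c, hc⟩ := WithTop.ne_top_iff_exists.mp hne
  have hcmem : c ∈ mu X \ insert 1 {len X} := Finset.mem_of_min hc.symm
  rw [Finset.mem_sdiff] at hcmem
  have hc1 : c ≤ 1 := by
    have h3 : (c : WithTop ℕ) ≤ ((1 : ℕ) : WithTop ℕ) := le_trans (le_of_eq hc) h2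
    exact_mod_cast h3
  have hcb := (chainval_bounds len hlen (hmu X hX).1 c hcmem.1).1
  have : c = 1 := le_antisymm hc1 hcb
  subst this
  exact hcmem.2 (Finset.mem_insert_self _ _)

end LenFacts3

section Main

variable (len : C → ℕ) (hlen : ∀ Z : C, ObjLength Z (len Z))
variable (mu : C → Finset ℕ) (hmu : IsGRMeasure len mu)
include hlen hmu

theorem isGRPred_of_iso {A B Y' : C} (e : A ≅ B) (h : IsGRPred mu Y' A) : IsGRPred mu Y' B := by
  obtain ⟨h1, h2, ⟨f, hf, hfi⟩, h4⟩ := h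
  haveI := hf
  refine ⟨h1, indec_of_iso e h2, ⟨f ≫ e.hom, mono_comp _ _, fun hiso => ?_⟩, ?_⟩
  · apply hfi
    have heq : f = (f ≫ e.hom) ≫ e.inv := by simp
    rw [heq]
    haveI := hiso
    infer_instance
  · intro v hv hvi
    have hv' : pushSub e.inv v ≠ ⊤ := fun hc =>
      hv (pushSub_inj e.inv (by rw [hc, pushSub_top_of_isIso]))
    have hvi' : Indecomposable ((pushSub e.inv v : Subobject A) : C) :=
      indec_of_iso (pushSubIso e.inv v).symm hvi
    have hres := h4 _ hv' hvi'
    rwa [mu_iso len hlen mu hmu (pushSubIso e.inv v) hvi'] at hres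

theorem mu_eq_insert {Y : C} (hY : Indecomposable Y)
    (t₀ : Subobject Y) (ht₀ : t₀ ≠ ⊤) (ht₀i : Indecomposable ((t₀ : Subobject Y) : C))
    (hmax : ∀ t : Subobject Y, t ≠ ⊤ → Indecomposable ((t : Subobject Y) : C) →
      lexLE (mu ((t : Subobject Y) : C)) (mu ((t₀ : Subobject Y) : C))) :
    mu Y = insert (len Y) (mu ((t₀ : Subobject Y) : C)) := by
  classical
  set B := mu ((t₀ : Subobject Y) : C) with hB
  have hge : lexLE (insert (len Y) B) (mu Y) :=
    (hmu Y hY).2 _ (chainval_push len hlen hY t₀ (hmu _ ht₀i).1)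
  obtain ⟨s, hchain, htop, hindec, himg⟩ := (hmu Y hY).1
  have hlent0 : len ((t₀ : Subobject Y) : C) < len Y := len_sub_lt len hlen t₀ ht₀
  have hlB : len Y ∉ B := fun hmem => by
    have := (chainval_bounds len hlen (hmu _ ht₀i).1 _ hmem).2
    omega
  have hle : lexLE (mu Y) (insert (len Y) B) := by
    rcases Finset.eq_empty_or_nonempty (s.erase ⊤) with he | hne
    · have hs : s = {⊤} := by
        apply Finset.eq_singleton_iff_unique_mem.mpr
        refine ⟨htop, fun x hx => ?_⟩
        by_contra hxne
        exact (Finset.notMem_empty x) (he ▸ Finset.mem_erase.mpr ⟨hxne, hx⟩)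
      have hmuY : mu Y = {len Y} := by
        rw [← himg, hs, Finset.image_singleton]
        congr 1
        exact len_iso len hlen (asIso (⊤ : Subobject Y).arrow)
      rw [hmuY]
      have e1 : {len Y} \ insert (len Y) B = ∅ := by
        rw [Finset.sdiff_eq_empty_iff_subset]
        exact Finset.singleton_subset_iff.mpr (Finset.mem_insert_self _ _)
      show (insert (len Y) B \ {len Y}).min ≤ ({len Y} \ insert (len Y) B).min
      rw [e1, Finset.min_empty]
      exact le_top
    · have herase : (↑(s.erase ⊤) : Set (Subobject Y)) ⊆ ↑s := by
        intro x hx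
        exact Finset.mem_coe.mpr (Finset.mem_of_mem_erase (Finset.mem_coe.mp hx))
      have hchain' : IsChain (· ≤ ·) (↑(s.erase ⊤) : Set (Subobject Y)) := hchain.mono herase
      obtain ⟨t, hts', hmax'⟩ := exists_chain_max (s.erase ⊤) hchain' hne
      have htne : t ≠ ⊤ := (Finset.mem_erase.mp hts').1
      have hts : t ∈ s := (Finset.mem_erase.mp hts').2
      have hindec' : ∀ u ∈ s.erase ⊤, Indecomposable ((u : Subobject Y) : C) :=
        fun u hu => hindec u (Finset.mem_of_mem_erase hu)
      have hval := chainval_restrict len hlen hchain' hindec' hts' hmax'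
      have hA'le : lexLE ((s.erase ⊤).image (fun u : Subobject Y => len ((u : Subobject Y) : C)))
          (mu ((t : Subobject Y) : C)) := (hmu _ (hindec t hts)).2 _ hval
      have htmu : lexLE (mu ((t : Subobject Y) : C)) B := hmax t htne (hindec t hts)
      have himg' : mu Y = insert (len Y)
          ((s.erase ⊤).image (fun u : Subobject Y => len ((u : Subobject Y) : C))) := by
        rw [← himg]
        conv_lhs => rw [← Finset.insert_erase htop]
        rw [Finset.image_insert]
        congr 1
        exact len_iso len hlen (asIso (⊤ : Subobject Y).arrow)
      rw [himg']
      apply lexLE_insert (lexLE_trans hA'le htmu)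
      · intro hmem
        obtain ⟨u, hu, hequ⟩ := Finset.mem_image.mp hmem
        have := len_sub_lt len hlen u (Finset.mem_erase.mp hu).1
        omega
      · exact hlB
  exact lexLE_antisymm hle hge

end Main

/-- (GR7): if `X, Y` are indecomposable with `μ(X) < μ(Y)`, then there are
indecomposable subobjects `Y' ⊂ Y'' ⊆ Y` such that `Y'` is a Gabriel-Roiter
predecessor of `Y''`, `μ(Y') ≤ μ(X) < μ(Y'')`, and `ℓ(Y') ≤ ℓ(X)`. -/
theorem grMeasure_GR7
    (len : C → ℕ) (hlen : ∀ Z : C, ObjLength Z (len Z))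
    (mu : C → Finset ℕ) (hmu : IsGRMeasure len mu)
    (X Y : C) (hX : Indecomposable X) (hY : Indecomposable Y)
    (hXY : lexLT (mu X) (mu Y)) :
    ∃ (t : Subobject Y) (Y' : C),
      Indecomposable ((t : Subobject Y) : C) ∧
      IsGRPred mu Y' ((t : Subobject Y) : C) ∧
      lexLE (mu Y') (mu X) ∧
      lexLT (mu X) (mu ((t : Subobject Y) : C)) ∧
      len Y' ≤ len X := by
  classical
  have h1X : 1 ∈ mu X := one_mem_mu len hlen mu hmu hX
  have key : ∀ n : ℕ, ∀ Y : C, len Y ≤ n → Indecomposable Y → lexLT (mu X) (mu Y) →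
      ∃ (t : Subobject Y) (Y' : C),
        Indecomposable ((t : Subobject Y) : C) ∧
        IsGRPred mu Y' ((t : Subobject Y) : C) ∧
        lexLE (mu Y') (mu X) ∧
        lexLT (mu X) (mu ((t : Subobject Y) : C)) ∧
        len Y' ≤ len X := by
    intro n
    induction n with
    | zero =>
      intro Y hlY hYind _
      have := one_le_len_of_indec len hlen hYind
      omega
    | succ n ih =>
      intro Y hlY hYind hXYlt
      by_cases hcase : ∃ t : Subobject Y, t ≠ ⊤ ∧ Indecomposable ((t : Subobject Y) : C) ∧
          lexLT (mu X) (mu ((t : Subobject Y) : C))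
      · obtain ⟨t, htne, hti, htlt⟩ := hcase
        have hlt : len ((t : Subobject Y) : C) ≤ n := by
          have := len_sub_lt len hlen t htne
          omega
        obtain ⟨u, Y', hui, hpred, hle, hltu, hlenle⟩ := ih _ hlt hti htlt
        have hindecPush : Indecomposable ((pushSub t.arrow u : Subobject Y) : C) :=
          indec_of_iso (pushSubIso t.arrow u).symm hui
        refine ⟨pushSub t.arrow u, Y', hindecPush, ?_, hle, ?_, hlenle⟩
        · exact isGRPred_of_iso len hlen mu hmu (pushSubIso t.arrow u).symm hpred
        · rw [mu_iso len hlen mu hmu (pushSubIso t.arrow u) hindecPush]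
          exact hltu
      · have hall : ∀ t : Subobject Y, t ≠ ⊤ → Indecomposable ((t : Subobject Y) : C) →
            lexLE (mu ((t : Subobject Y) : C)) (mu X) := by
          intro t ht1 ht2
          by_contra hc
          exact hcase ⟨t, ht1, ht2, lexLT_iff_not_lexLE.mpr hc⟩
        -- len Y ≥ 2
        have hlenY2 : 2 ≤ len Y := by
          by_contra h
          push_neg at h
          have h1 : 1 ≤ len Y := one_le_len_of_indec len hlen hYind
          have hlY1 : len Y = 1 := by omega
          have hmuY : mu Y = {1} := by
            apply Finset.eq_singleton_iff_unique_mem.mpr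
            constructor
            · have := chainval_mem_len len hlen (hmu Y hYind).1
              rwa [hlY1] at this
            · intro a ha
              have hb := chainval_bounds len hlen (hmu Y hYind).1 a ha
              omega
          have hXe : mu X = {1} := by
            have hsd : mu Y \ mu X = ∅ := by
              rw [hmuY, Finset.sdiff_eq_empty_iff_subset]
              exact Finset.singleton_subset_iff.mpr h1X
            have hl := hXYlt.1
            have hl' : (mu Y \ mu X).min ≤ (mu X \ mu Y).min := hl
            rw [hsd, Finset.min_empty, top_le_iff, Finset.min_eq_top,
              Finset.sdiff_eq_empty_iff_subset, hmuY] at hl'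
            exact Finset.Subset.antisymm hl' (Finset.singleton_subset_iff.mpr h1X)
          exact hXYlt.2 (by rw [hmuY, hXe]; exact lexLE_refl _)
        -- candidate set of measures of proper indecomposable subobjects
        set V : Set (Finset ℕ) :=
          {A | ∃ t : Subobject Y, t ≠ ⊤ ∧ Indecomposable ((t : Subobject Y) : C) ∧
            mu ((t : Subobject Y) : C) = A} with hV
        have hVfin : V.Finite := by
          apply Set.Finite.subset ((Finset.range (len Y + 1)).powerset : Finset (Finset ℕ)).finite_toSet
          rintro A ⟨t, htne, hti, rfl⟩
          rw [Finset.mem_coe, Finset.mem_powerset]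
          intro a ha
          have hb := chainval_bounds len hlen (hmu _ hti).1 a ha
          have := len_sub_le len hlen t
          rw [Finset.mem_range]
          omega
        have hVne : V.Nonempty := by
          obtain ⟨t, ht1⟩ := exists_len_one_sub len hlen (len Y) Y rfl (by omega)
          have htne : t ≠ ⊤ := by
            intro hc
            subst hc
            rw [len_iso len hlen (asIso (⊤ : Subobject Y).arrow)] at ht1
            omega
          exact ⟨mu ((t : Subobject Y) : C), t, htne, indec_of_len_one len hlen ht1, rfl⟩
        obtain ⟨Amax, hAmaxV, hAmaxMax⟩ := exists_lex_max hVfin.toFinset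
          (Set.Finite.toFinset_nonempty hVfin |>.mpr hVne)
        rw [Set.Finite.mem_toFinset] at hAmaxV
        obtain ⟨t₀, ht₀ne, ht₀i, ht₀mu⟩ := hAmaxV
        have hmax : ∀ t : Subobject Y, t ≠ ⊤ → Indecomposable ((t : Subobject Y) : C) →
            lexLE (mu ((t : Subobject Y) : C)) (mu ((t₀ : Subobject Y) : C)) := by
          intro t ht1 ht2
          rw [ht₀mu]
          exact hAmaxMax _ (Set.Finite.mem_toFinset hVfin |>.mpr ⟨t, ht1, ht2, rfl⟩)
        have hmuYeq : mu Y = insert (len Y) (mu ((t₀ : Subobject Y) : C)) :=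
          mu_eq_insert len hlen mu hmu hYind t₀ ht₀ne ht₀i hmax
        -- the Gabriel-Roiter predecessor of Y is (t₀ : C)
        have hpredY : IsGRPred mu ((t₀ : Subobject Y) : C) Y := by
          refine ⟨ht₀i, hYind, ⟨t₀.arrow, inferInstance, ?_⟩, hmax⟩
          intro hiso
          exact ht₀ne (by
            rw [← Subobject.mk_arrow t₀]
            exact Subobject.mk_eq_top_of_isIso _)
        have hitop : Indecomposable (((⊤ : Subobject Y) : Subobject Y) : C) :=
          indec_of_iso (asIso (⊤ : Subobject Y).arrow).symm hYind
        have hmutop : mu (((⊤ : Subobject Y) : Subobject Y) : C) = mu Y :=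
          mu_iso len hlen mu hmu (asIso (⊤ : Subobject Y).arrow) hitop
        have hleX : lexLE (mu ((t₀ : Subobject Y) : C)) (mu X) := hall t₀ ht₀ne ht₀i
        refine ⟨⊤, ((t₀ : Subobject Y) : C), hitop, ?_, hleX, ?_, ?_⟩
        · exact isGRPred_of_iso len hlen mu hmu (asIso (⊤ : Subobject Y).arrow).symm hpredY
        · rw [hmutop]
          exact hXYlt
        · -- len (t₀ : C) ≤ len X
          have hAl : lexLE (mu X) (insert (len Y) (mu ((t₀ : Subobject Y) : C))) := by
            rw [← hmuYeq]
            exact hXYlt.1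
          have hBl : ∀ b ∈ mu ((t₀ : Subobject Y) : C), b < len Y := by
            intro b hb
            have h1 := (chainval_bounds len hlen (hmu _ ht₀i).1 b hb).2
            have h2 := len_sub_lt len hlen t₀ ht₀ne
            omega
          have hM : ∀ a ∈ mu X, a ≤ len X :=
            fun a ha => (chainval_bounds len hlen (hmu X hX).1 a ha).2
          exact lex_max_le hleX hAl hBl hM _
            (chainval_mem_len len hlen (hmu _ ht₀i).1)
  exact key (len Y) Y le_rfl hY hXY
end

section
/- (Gabriel's main property) Let A be an abelian length category with Gabriel-Roiter measure μ. If X is indecomposable and X ⊆ Y = Y_1 ⊕ ... ⊕ Y_r with all Y_i indecomposable, then μ(X) ≤ max_i μ(Y_i); moreover if μ(X) = max_i μ(Y_i), then X is a direct summand of Y. -/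
open CategoryTheory CategoryTheory.Limits

variable {C : Type*} [Category C] [Abelian C]

instance : HasFiniteBiproducts C := HasFiniteBiproducts.of_hasFiniteProducts

set_option linter.unusedSectionVars false
set_option maxHeartbeats 1000000

namespace GRaux


/-- characterization of `lexLE` by first difference -/
theorem lexLE_iff (A B : Finset ℕ) :
    lexLE A B ↔ A = B ∨ ∃ m, m ∈ B ∧ m ∉ A ∧ ∀ x, x < m → (x ∈ A ↔ x ∈ B) := by
  constructor
  · intro h
    by_cases hAB : A = B
    · exact Or.inl hAB
    · right
      rcases Finset.eq_empty_or_nonempty (B \ A) with hBA | hBA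
      · exfalso
        unfold lexLE at h
        rw [hBA] at h
        simp only [Finset.min_empty, top_le_iff, Finset.min_eq_top] at h
        apply hAB
        have h1 : A ⊆ B := by
          intro x hx
          by_contra hxB
          have : x ∈ A \ B := Finset.mem_sdiff.2 ⟨hx, hxB⟩
          rw [h] at this; simp at this
        have h2 : B ⊆ A := by
          intro x hx
          by_contra hxA
          have : x ∈ B \ A := Finset.mem_sdiff.2 ⟨hx, hxA⟩
          rw [hBA] at this; simp at this
        exact Finset.Subset.antisymm h1 h2
      · obtain ⟨m, hm⟩ := Finset.min_of_nonempty hBA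
        have hmem : m ∈ B \ A := Finset.mem_of_min hm
        refine ⟨m, (Finset.mem_sdiff.1 hmem).1, (Finset.mem_sdiff.1 hmem).2, ?_⟩
        intro x hx
        constructor
        · intro hxA
          by_contra hxB
          have hx' : x ∈ A \ B := Finset.mem_sdiff.2 ⟨hxA, hxB⟩
          have hle : (A \ B).min ≤ (x : ℕ∞) := Finset.min_le hx'
          unfold lexLE at h
          rw [hm] at h
          have : (m : ℕ∞) ≤ (x : ℕ∞) := le_trans h hle
          exact absurd (WithTop.coe_le_coe.1 this) (not_le.2 hx)
        · intro hxB
          by_contra hxA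
          have hx' : x ∈ B \ A := Finset.mem_sdiff.2 ⟨hxB, hxA⟩
          have hle : (B \ A).min ≤ (x : ℕ∞) := Finset.min_le hx'
          rw [hm] at hle
          exact absurd (WithTop.coe_le_coe.1 hle) (not_le.2 hx)
  · rintro (rfl | ⟨m, hmB, hmA, hagree⟩)
    · simp [lexLE]
    · unfold lexLE
      have h1 : (B \ A).min ≤ (m : ℕ∞) := Finset.min_le (Finset.mem_sdiff.2 ⟨hmB, hmA⟩)
      refine le_trans h1 ?_
      rcases Finset.eq_empty_or_nonempty (A \ B) with hAB | hAB
      · rw [hAB]; simp; exact le_top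
      · obtain ⟨a, ha⟩ := Finset.min_of_nonempty hAB
        have hmem : a ∈ A \ B := Finset.mem_of_min ha
        rw [ha]
        rw [Finset.mem_sdiff] at hmem
        by_contra hc
        have hma : a < m := by
          have h2 := not_le.1 hc
          exact WithTop.coe_lt_coe.1 h2
        exact hmem.2 ((hagree a hma).1 hmem.1)

theorem lexLE_refl (A : Finset ℕ) : lexLE A A := by rw [lexLE_iff]; exact Or.inl rfl

theorem lexLE_total (A B : Finset ℕ) : lexLE A B ∨ lexLE B A := by
  by_cases hAB : A = B
  · exact Or.inl (by rw [lexLE_iff]; exact Or.inl hAB)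
  · have hne : ((A \ B) ∪ (B \ A)).Nonempty := by
      rw [Finset.nonempty_iff_ne_empty]
      intro h
      rw [Finset.union_eq_empty] at h
      apply hAB
      apply Finset.Subset.antisymm
      · intro x hx
        by_contra hxB
        have : x ∈ A \ B := Finset.mem_sdiff.2 ⟨hx, hxB⟩
        rw [h.1] at this; simp at this
      · intro x hx
        by_contra hxA
        have : x ∈ B \ A := Finset.mem_sdiff.2 ⟨hx, hxA⟩
        rw [h.2] at this; simp at this
    obtain ⟨m, hm⟩ := Finset.min_of_nonempty hne
    have hmem := Finset.mem_of_min hm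
    have hagree : ∀ x, x < m → (x ∈ A ↔ x ∈ B) := by
      intro x hx
      by_contra hc
      have hmem2 : x ∈ ((A \ B) ∪ (B \ A)) := by
        rw [Finset.mem_union, Finset.mem_sdiff, Finset.mem_sdiff]
        by_cases h1 : x ∈ A
        · by_cases h2 : x ∈ B
          · exact absurd ⟨fun _ => h2, fun _ => h1⟩ hc
          · exact Or.inl ⟨h1, h2⟩
        · by_cases h2 : x ∈ B
          · exact Or.inr ⟨h2, h1⟩
          · exact absurd ⟨fun h => absurd h h1, fun h => absurd h h2⟩ hc
      have hle := Finset.min_le hmem2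
      rw [hm] at hle
      exact absurd (WithTop.coe_le_coe.1 hle) (not_le.2 hx)
    rw [Finset.mem_union, Finset.mem_sdiff, Finset.mem_sdiff] at hmem
    rcases hmem with ⟨hA, hB⟩ | ⟨hB, hA⟩
    · right; rw [lexLE_iff]; right
      exact ⟨m, hA, hB, fun x hx => (hagree x hx).symm⟩
    · left; rw [lexLE_iff]; right
      exact ⟨m, hB, hA, hagree⟩

theorem lexLE_antisymm {A B : Finset ℕ} (h1 : lexLE A B) (h2 : lexLE B A) : A = B := by
  rw [lexLE_iff] at h1 h2
  rcases h1 with rfl | ⟨m, hmB, hmA, hag⟩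
  · rfl
  rcases h2 with h | ⟨m', hm'A, hm'B, hag'⟩
  · exact h.symm
  exfalso
  rcases lt_trichotomy m m' with h | rfl | h
  · exact hmA ((hag' m h).1 hmB)
  · exact hmA hm'A
  · exact hm'B ((hag m' h).1 hm'A)

theorem lexLE_trans {A B C : Finset ℕ} (h1 : lexLE A B) (h2 : lexLE B C) : lexLE A C := by
  rw [lexLE_iff] at h1 h2 ⊢
  rcases h1 with rfl | ⟨m, hmB, hmA, hag⟩
  · exact h2
  rcases h2 with rfl | ⟨m', hm'C, hm'B, hag'⟩
  · exact Or.inr ⟨m, hmB, hmA, hag⟩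
  right
  rcases lt_trichotomy m m' with h | rfl | h
  · exact ⟨m, (hag' m h).1 hmB, hmA, fun x hx => (hag x hx).trans (hag' x (hx.trans h))⟩
  · exact absurd hmB hm'B
  · refine ⟨m', hm'C, fun hc => hm'B ((hag m' h).1 hc), fun x hx => (hag x (hx.trans h)).trans (hag' x hx)⟩

/-- adding elements is lex-larger -/
theorem lexLE_union (A E : Finset ℕ) : lexLE A (A ∪ E) := by
  rw [lexLE_iff]
  by_cases h : A = A ∪ E
  · exact Or.inl h
  right
  have hne : (E \ A).Nonempty := by
    rw [Finset.nonempty_iff_ne_empty]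
    intro hc
    apply h
    have : E ⊆ A := by
      intro x hx
      by_contra hxA
      have : x ∈ E \ A := Finset.mem_sdiff.2 ⟨hx, hxA⟩
      rw [hc] at this; simp at this
    rw [Finset.union_eq_left.mpr this]
  obtain ⟨m, hm⟩ := Finset.min_of_nonempty hne
  have hmem := Finset.mem_of_min hm
  rw [Finset.mem_sdiff] at hmem
  refine ⟨m, Finset.mem_union_right _ hmem.1, hmem.2, ?_⟩
  intro x hx
  constructor
  · exact fun h => Finset.mem_union_left _ h
  · intro hxu
    rcases Finset.mem_union.1 hxu with h | h
    · exact h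
    · by_contra hxA
      have : x ∈ E \ A := Finset.mem_sdiff.2 ⟨h, hxA⟩
      have := Finset.min_le this
      rw [hm] at this
      exact absurd (by exact_mod_cast this) (not_le.2 hx)

theorem lexLE_union_singleton {A B : Finset ℕ} {c : ℕ}
    (h : lexLE A B) (hA : ∀ x ∈ A, x < c) (hB : ∀ x ∈ B, x < c) :
    lexLE (A ∪ {c}) (B ∪ {c}) := by
  rw [lexLE_iff] at h ⊢
  rcases h with rfl | ⟨m, hmB, hmA, hag⟩
  · exact Or.inl rfl
  right
  refine ⟨m, Finset.mem_union_left _ hmB, ?_, ?_⟩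
  · intro hc
    rcases Finset.mem_union.1 hc with h | h
    · exact hmA h
    · rw [Finset.mem_singleton] at h
      subst h
      exact absurd (hB m hmB) (lt_irrefl _)
  · intro x hx
    simp only [Finset.mem_union, Finset.mem_singleton]
    constructor
    · rintro (h | h)
      · exact Or.inl ((hag x hx).1 h)
      · exact Or.inr h
    · rintro (h | h)
      · exact Or.inl ((hag x hx).2 h)
      · exact Or.inr h

/-- the sandwich lemma: if `B ≤ A ∪ E` and all of `A`, `B` lie below all of `E`,
then `B ≤ A`. -/
theorem lexLE_sandwich {A B E : Finset ℕ} {c : ℕ}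
    (h : lexLE B (A ∪ E)) (hA : ∀ x ∈ A, x < c) (hB : ∀ x ∈ B, x < c)
    (hE : ∀ x ∈ E, c ≤ x) : lexLE B A := by
  rw [lexLE_iff] at h ⊢
  rcases h with h | ⟨m, hm, hmB, hag⟩
  · -- B = A ∪ E  forces E ⊆ B, so E = ∅
    have hEB : E ⊆ B := h ▸ Finset.subset_union_right
    have hEempty : E = ∅ := by
      rw [Finset.eq_empty_iff_forall_notMem]
      intro x hx
      exact absurd (hB x (hEB hx)) (not_lt.2 (hE x hx))
    left; rw [h, hEempty, Finset.union_empty]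
  · rcases Finset.mem_union.1 hm with hmA | hmE
    · right
      refine ⟨m, hmA, hmB, fun x hx => ?_⟩
      rw [hag x hx, Finset.mem_union]
      constructor
      · rintro (h | h)
        · exact h
        · exact absurd (hE x h) (not_le.2 (lt_trans hx (hA m hmA)))
      · exact Or.inl
    · left
      apply Finset.Subset.antisymm
      · intro x hx
        have hxc : x < c := hB x hx
        have hxm : x < m := lt_of_lt_of_le hxc (hE m hmE)
        rcases Finset.mem_union.1 ((hag x hxm).1 hx) with h | h
        · exact h
        · exact absurd (hE x h) (not_le.2 hxc)
      · intro x hx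
        have hxc : x < c := hA x hx
        have hxm : x < m := lt_of_lt_of_le hxc (hE m hmE)
        exact (hag x hxm).2 (Finset.mem_union_left _ hx)

/-- maximum of a finite set under a total transitive relation -/
theorem exists_rel_max {α : Type*} (R : α → α → Prop)
    (htrans : ∀ a b c, R a b → R b c → R a c)
    (s : Finset α) (hs : s.Nonempty)
    (htot : ∀ a ∈ s, ∀ b ∈ s, R a b ∨ R b a) :
    ∃ a ∈ s, ∀ b ∈ s, R b a := by
  classical
  induction s using Finset.induction_on with
  | empty => exact absurd hs (by simp)
  | @insert a s ha ih =>
    rcases Finset.eq_empty_or_nonempty s with rfl | hs'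
    · refine ⟨a, Finset.mem_insert_self _ _, ?_⟩
      intro b hb
      rw [Finset.mem_insert] at hb
      rcases hb with rfl | hb
      · rcases htot b (Finset.mem_insert_self _ _) b (Finset.mem_insert_self _ _) with h | h <;> exact h
      · simp at hb
    · obtain ⟨m, hm, hmax⟩ := ih hs' (fun x hx y hy =>
        htot x (Finset.mem_insert_of_mem hx) y (Finset.mem_insert_of_mem hy))
      rcases htot m (Finset.mem_insert_of_mem hm) a (Finset.mem_insert_self _ _) with h | h
      · refine ⟨a, Finset.mem_insert_self _ _, ?_⟩
        intro b hb
        rcases Finset.mem_insert.1 hb with rfl | hb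
        · rcases htot b (Finset.mem_insert_self _ _) b (Finset.mem_insert_self _ _) with h' | h' <;> exact h'
        · exact htrans _ _ _ (hmax b hb) h
      · refine ⟨m, Finset.mem_insert_of_mem hm, ?_⟩
        intro b hb
        rcases Finset.mem_insert.1 hb with rfl | hb
        · exact h
        · exact hmax b hb



theorem strictMono_snoc {α : Type*} [Preorder α] {n : ℕ} {f : Fin (n + 1) → α}
    (hf : StrictMono f) {a : α} (ha : f (Fin.last n) < a) : StrictMono (Fin.snoc f a) := by
  intro i j hij
  rcases Fin.eq_castSucc_or_eq_last j with ⟨j', rfl⟩ | rfl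
  · rcases Fin.eq_castSucc_or_eq_last i with ⟨i', rfl⟩ | rfl
    · rw [Fin.snoc_castSucc, Fin.snoc_castSucc]
      exact hf (Fin.castSucc_lt_castSucc_iff.1 hij)
    · exact absurd hij (by
        simp only [Fin.lt_iff_val_lt_val, Fin.val_last, Fin.coe_castSucc]
        omega)
  · rcases Fin.eq_castSucc_or_eq_last i with ⟨i', rfl⟩ | rfl
    · rw [Fin.snoc_castSucc, Fin.snoc_last]
      exact lt_of_le_of_lt (hf.monotone (Fin.le_last i')) ha
    · exact absurd hij (lt_irrefl _)

theorem strictMono_cons {α : Type*} [Preorder α] {n : ℕ} {f : Fin (n + 1) → α}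
    (hf : StrictMono f) {b : α} (hb : b < f 0) : StrictMono (Fin.cons b f) := by
  intro i j hij
  rcases Fin.eq_zero_or_eq_succ j with rfl | ⟨j', rfl⟩
  · exact absurd hij (Fin.not_lt_zero i)
  · rcases Fin.eq_zero_or_eq_succ i with rfl | ⟨i', rfl⟩
    · rw [Fin.cons_zero, Fin.cons_succ]
      exact lt_of_lt_of_le hb (hf.monotone (Fin.zero_le j'))
    · rw [Fin.cons_succ, Fin.cons_succ]
      exact hf (Fin.succ_lt_succ_iff.1 hij)

section Length

variable (len : C → ℕ) (hlen : ∀ Z : C, ObjLength Z (len Z))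

/-- push a subobject of `P` forward along a mono `P ⟶ Q` -/
noncomputable def pushMk {P Q : C} (f : P ⟶ Q) [Mono f] (t : Subobject P) : Subobject Q :=
  Subobject.mk (t.arrow ≫ f)

theorem pushMk_le_iff {P Q : C} (f : P ⟶ Q) [Mono f] (a b : Subobject P) :
    pushMk f a ≤ pushMk f b ↔ a ≤ b := by
  constructor
  · intro h
    have : Subobject.ofMkLEMk _ _ h ≫ b.arrow = a.arrow := by
      apply (cancel_mono f).1
      rw [Category.assoc]; exact Subobject.ofMkLEMk_comp h
    have := Subobject.mk_le_mk_of_comm _ this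
    rwa [Subobject.mk_arrow, Subobject.mk_arrow] at this
  · intro h
    apply Subobject.mk_le_mk_of_comm (Subobject.ofLE a b h)
    rw [← Category.assoc, Subobject.ofLE_arrow]

theorem pushMk_strictMono {P Q : C} (f : P ⟶ Q) [Mono f] : StrictMono (pushMk f) := by
  intro a b hab
  rw [lt_iff_le_and_ne] at hab ⊢
  refine ⟨(pushMk_le_iff f a b).2 hab.1, fun h => hab.2 ?_⟩
  exact le_antisymm hab.1 ((pushMk_le_iff f b a).1 h.ge)

theorem pushMk_top {P Q : C} (f : P ⟶ Q) [Mono f] : pushMk f ⊤ = Subobject.mk f := by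
  unfold pushMk
  exact Subobject.mk_eq_mk_of_comm _ _ (asIso ((⊤ : Subobject P).arrow)) rfl

/-- underlying object of a pushed subobject -/
noncomputable def pushMkIso {P Q : C} (f : P ⟶ Q) [Mono f] (t : Subobject P) :
    ((pushMk f t : Subobject Q) : C) ≅ (t : C) :=
  Subobject.underlyingIso _

include hlen in
theorem len_le_of_strictMono {P Q : C} (g : Subobject P → Subobject Q)
    (hg : StrictMono g) : len P ≤ len Q := by
  obtain ⟨f, hf, -, -⟩ := (hlen P).1
  exact (hlen Q).2 _ (g ∘ f) (hg.comp hf)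

include hlen in
theorem len_iso {P Q : C} (e : P ≅ Q) : len P = len Q := by
  apply le_antisymm
  · exact len_le_of_strictMono len hlen _ (pushMk_strictMono e.hom)
  · exact len_le_of_strictMono len hlen _ (pushMk_strictMono e.inv)

include hlen in
theorem len_subobject_le {Q : C} (t : Subobject Q) : len (t : C) ≤ len Q :=
  len_le_of_strictMono len hlen _ (pushMk_strictMono t.arrow)

include hlen in
theorem len_mk_eq {P Q : C} (f : P ⟶ Q) [Mono f] : len ((Subobject.mk f : Subobject Q) : C) = len P :=
  len_iso len hlen (Subobject.underlyingIso f)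

include hlen in
theorem len_subobject_lt {Q : C} (t : Subobject Q) (ht : t ≠ ⊤) :
    len (t : C) + 1 ≤ len Q := by
  obtain ⟨f, hf, -, hftop⟩ := (hlen (t : C)).1
  have h1 : StrictMono (Fin.snoc (pushMk t.arrow ∘ f) (⊤ : Subobject Q)) := by
    apply strictMono_snoc ((pushMk_strictMono t.arrow).comp hf)
    show pushMk t.arrow (f (Fin.last _)) < ⊤
    rw [hftop, pushMk_top, Subobject.mk_arrow]
    exact lt_top_iff_ne_top.2 ht
  exact (hlen Q).2 _ _ h1

include hlen in
theorem len_top {Q : C} : len ((⊤ : Subobject Q) : C) = len Q :=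
  len_iso len hlen (asIso ((⊤ : Subobject Q).arrow))

include hlen in
theorem len_mono_le {P Q : C} (f : P ⟶ Q) [Mono f] : len P ≤ len Q := by
  have := len_subobject_le len hlen (Subobject.mk f)
  rwa [len_mk_eq len hlen] at this

include hlen in
theorem isIso_of_mono_of_len_eq {P Q : C} (f : P ⟶ Q) [Mono f] (h : len P = len Q) :
    IsIso f := by
  rw [Subobject.isIso_iff_mk_eq_top]
  by_contra hne
  have := len_subobject_lt len hlen (Subobject.mk f) hne
  rw [len_mk_eq len hlen, h] at this
  omega

theorem subobject_eq_of_isZero {Q : C} (h : IsZero Q) (a b : Subobject Q) : a = b := by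
  have key : ∀ c : Subobject Q, IsZero ((c : Subobject Q) : C) := by
    intro c
    rw [IsZero.iff_id_eq_zero]
    have : c.arrow = 0 := h.eq_of_tgt c.arrow 0
    have h2 : 𝟙 (c : C) ≫ c.arrow = 0 ≫ c.arrow := by simp [this]
    exact (cancel_mono c.arrow).1 h2
  apply le_antisymm
  · exact Subobject.le_of_comm 0 ((key a).eq_of_src _ _)
  · exact Subobject.le_of_comm 0 ((key b).eq_of_src _ _)

include hlen in
theorem len_eq_zero_iff {Q : C} : len Q = 0 ↔ IsZero Q := by
  constructor
  · intro h
    obtain ⟨f, hf, hbot, htop⟩ := (hlen Q).1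
    have : (⊥ : Subobject Q) = ⊤ := by
      rw [← hbot, ← htop]
      congr
      omega
    have hz : IsZero ((⊤ : Subobject Q) : C) := by
      rw [← this]
      exact (isZero_zero C).of_iso Subobject.botCoeIsoZero
    exact hz.of_iso (asIso ((⊤ : Subobject Q).arrow)).symm
  · intro h
    by_contra hne
    have hpos : 1 ≤ len Q := Nat.one_le_iff_ne_zero.2 hne
    obtain ⟨f, hf, hbot, htop⟩ := (hlen Q).1
    have : f 0 < f ⟨1, by omega⟩ := hf (by simp [Fin.lt_iff_val_lt_val])
    exact absurd (subobject_eq_of_isZero h (f 0) (f ⟨1, by omega⟩)) (ne_of_lt this)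

include hlen in
theorem len_pos_of_not_isZero {Q : C} (h : ¬IsZero Q) : 1 ≤ len Q := by
  rw [Nat.one_le_iff_ne_zero]
  intro h0
  exact h ((len_eq_zero_iff len hlen).1 h0)

theorem subobject_isZero_iff_bot {Q : C} (t : Subobject Q) :
    IsZero ((t : Subobject Q) : C) ↔ t = ⊥ := by
  constructor
  · intro h
    apply le_antisymm _ bot_le
    apply Subobject.le_of_comm (0 : ((t : Subobject Q) : C) ⟶ ((⊥ : Subobject Q) : C))
    rw [zero_comp]
    exact (h.eq_of_src _ _)
  · rintro rfl
    exact (isZero_zero C).of_iso Subobject.botCoeIsoZero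

end Length



/-- image of (epi ≫ mono) is the mono -/
theorem imageSubobject_epi_comp' {P Q R : C} (p : P ⟶ Q) [Epi p] (m : Q ⟶ R) [Mono m] :
    imageSubobject (p ≫ m) = Subobject.mk m := by
  have : IsIso (image.preComp p m) := isIso_of_mono_of_epi _
  have h1 : (asIso (image.preComp p m)).hom ≫ image.ι m = image.ι (p ≫ m) :=
    image.preComp_ι p m
  have h2 : Subobject.mk (image.ι (p ≫ m)) = Subobject.mk (image.ι m) :=
    Subobject.mk_eq_mk_of_comm _ _ (asIso (image.preComp p m)) h1
  rw [show imageSubobject (p ≫ m) = Subobject.mk (image.ι (p ≫ m)) from rfl, h2,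
    ← imageSubobject_mono m]

/-- preimage of a subobject along a morphism, via pullback -/
noncomputable def pbSub {Z M : C} (e : Z ⟶ M) (s : Subobject M) : Subobject Z :=
  Subobject.mk (pullback.snd s.arrow e)

theorem pbSub_monotone {Z M : C} (e : Z ⟶ M) : Monotone (pbSub e) := by
  intro s t h
  apply Subobject.mk_le_mk_of_comm
    (pullback.lift (pullback.fst s.arrow e ≫ Subobject.ofLE s t h) (pullback.snd s.arrow e)
      (by rw [Category.assoc, Subobject.ofLE_arrow]; exact pullback.condition))
  exact pullback.lift_snd _ _ _

theorem imageSubobject_pbSub {Z M : C} (e : Z ⟶ M) [Epi e] (s : Subobject M) :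
    imageSubobject ((pbSub e s).arrow ≫ e) = s := by
  unfold pbSub
  have harrow : (Subobject.mk (pullback.snd s.arrow e)).arrow
      = (Subobject.underlyingIso (pullback.snd s.arrow e)).hom ≫ pullback.snd s.arrow e :=
    (Subobject.underlyingIso_hom_comp_eq_mk _).symm
  rw [harrow, Category.assoc, imageSubobject_iso_comp, ← pullback.condition,
    imageSubobject_epi_comp', Subobject.mk_arrow]

theorem pbSub_injective {Z M : C} (e : Z ⟶ M) [Epi e] : Function.Injective (pbSub e) := by
  intro s t h
  rw [← imageSubobject_pbSub e s, ← imageSubobject_pbSub e t, h]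

theorem pbSub_strictMono {Z M : C} (e : Z ⟶ M) [Epi e] : StrictMono (pbSub e) :=
  pbSub_monotone e |>.strictMono_of_injective (pbSub_injective e)

theorem kernel_le_pbSub_bot {Z M : C} (e : Z ⟶ M) :
    Subobject.mk (kernel.ι e) ≤ pbSub e (⊥ : Subobject M) := by
  apply Subobject.mk_le_mk_of_comm
    (pullback.lift 0 (kernel.ι e) (by rw [zero_comp, kernel.condition]))
  exact pullback.lift_snd _ _ _

theorem pbSub_bot_ne_bot {Z M : C} (e : Z ⟶ M) (h : ¬Mono e) :
    pbSub e (⊥ : Subobject M) ≠ ⊥ := by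
  intro hc
  have h1 := kernel_le_pbSub_bot e
  rw [hc, le_bot_iff, Subobject.mk_eq_bot_iff_zero] at h1
  exact h (Preadditive.mono_of_kernel_zero h1)

theorem len_lt_of_epi_not_mono (len : C → ℕ) (hlen : ∀ Z : C, ObjLength Z (len Z))
    {Z M : C} (e : Z ⟶ M) [Epi e] (h : ¬Mono e) : len M + 1 ≤ len Z := by
  obtain ⟨f, hf, hbot, htop⟩ := (hlen M).1
  have hchain : StrictMono (Fin.cons (⊥ : Subobject Z) (pbSub e ∘ f) :
      Fin (len M + 2) → Subobject Z) := by
    apply strictMono_cons ((pbSub_strictMono e).comp hf)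
    show (⊥ : Subobject Z) < pbSub e (f 0)
    rw [hbot]
    rcases lt_or_eq_of_le (bot_le : (⊥ : Subobject Z) ≤ pbSub e ⊥) with hlt | heq
    · exact hlt
    · exact absurd heq.symm (pbSub_bot_ne_bot e h)
  exact (hlen Z).2 _ _ hchain






theorem isZero_snd_of_isIso_inl {A B : C} (h : IsIso (biprod.inl : A ⟶ A ⊞ B)) : IsZero B := by
  have hsnd : (biprod.snd : A ⊞ B ⟶ B) = 0 := by
    have : (inv (biprod.inl : A ⟶ A ⊞ B)) ≫ (biprod.inl : A ⟶ A ⊞ B) ≫ biprod.snd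
        = inv biprod.inl ≫ 0 := by rw [biprod.inl_snd]
    rw [← Category.assoc, IsIso.inv_hom_id, Category.id_comp, comp_zero] at this
    exact this
  rw [IsZero.iff_id_eq_zero, ← biprod.inr_snd, hsnd, comp_zero]

theorem isZero_fst_of_isIso_inr {A B : C} (h : IsIso (biprod.inr : B ⟶ A ⊞ B)) : IsZero A := by
  have hfst : (biprod.fst : A ⊞ B ⟶ A) = 0 := by
    have : (inv (biprod.inr : B ⟶ A ⊞ B)) ≫ (biprod.inr : B ⟶ A ⊞ B) ≫ biprod.fst
        = inv biprod.inr ≫ 0 := by rw [biprod.inr_fst]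
    rw [← Category.assoc, IsIso.inv_hom_id, Category.id_comp, comp_zero] at this
    exact this
  rw [IsZero.iff_id_eq_zero, ← biprod.inl_fst, hfst, comp_zero]

theorem isIso_inl_of_isZero {A B : C} (h : IsZero B) : IsIso (biprod.inl : A ⟶ A ⊞ B) := by
  refine ⟨biprod.fst, biprod.inl_fst, ?_⟩
  apply biprod.hom_ext
  · rw [Category.assoc, biprod.inl_fst, Category.comp_id, Category.id_comp]
  · rw [Category.assoc, biprod.inl_snd, comp_zero, Category.id_comp]
    exact (h.eq_of_tgt _ _)

/-- Splitting: if `u : X ⟶ Y` has a retraction `ρ` then `Y ≅ X ⊞ kernel ρ`,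
compatibly with `u`. -/
noncomputable def splitIso {X Y : C} (u : X ⟶ Y) (ρ : Y ⟶ X) (h : u ≫ ρ = 𝟙 X) :
    Y ≅ X ⊞ kernel ρ where
  hom := biprod.lift ρ (kernel.lift ρ (𝟙 Y - ρ ≫ u) (by
    rw [Preadditive.sub_comp, Category.id_comp, Category.assoc, h, Category.comp_id, sub_self]))
  inv := biprod.desc u (kernel.ι ρ)
  hom_inv_id := by
    rw [biprod.lift_desc]
    rw [kernel.lift_ι]
    simp
  inv_hom_id := by
    apply biprod.hom_ext'
    · simp only [← Category.assoc, biprod.inl_desc, Category.comp_id]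
      apply biprod.hom_ext
      · rw [Category.assoc, biprod.lift_fst, biprod.inl_fst, h]
      · rw [Category.assoc, biprod.lift_snd, biprod.inl_snd]
        apply (cancel_mono (kernel.ι ρ)).1
        rw [Category.assoc, kernel.lift_ι, zero_comp]
        rw [Preadditive.comp_sub, Category.comp_id, ← Category.assoc, h, Category.id_comp, sub_self]
    · simp only [← Category.assoc, biprod.inr_desc, Category.comp_id]
      apply biprod.hom_ext
      · rw [Category.assoc, biprod.lift_fst, biprod.inr_fst, kernel.condition]
      · rw [Category.assoc, biprod.lift_snd, biprod.inr_snd]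
        apply (cancel_mono (kernel.ι ρ)).1
        rw [Category.assoc, kernel.lift_ι, Category.id_comp]
        rw [Preadditive.comp_sub, Category.comp_id, ← Category.assoc, kernel.condition,
          zero_comp, sub_zero]

theorem comp_splitIso_hom {X Y : C} (u : X ⟶ Y) (ρ : Y ⟶ X) (h : u ≫ ρ = 𝟙 X) :
    u ≫ (splitIso u ρ h).hom = biprod.inl := by
  unfold splitIso
  dsimp
  apply biprod.hom_ext
  · rw [Category.assoc, biprod.lift_fst, biprod.inl_fst, h]
  · rw [Category.assoc, biprod.lift_snd, biprod.inl_snd]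
    apply (cancel_mono (kernel.ι ρ)).1
    rw [Category.assoc, kernel.lift_ι, zero_comp]
    rw [Preadditive.comp_sub, Category.comp_id, ← Category.assoc, h, Category.id_comp, sub_self]

/-- an object with a retraction onto a nonzero non-isomorphic subobject is decomposable;
the contrapositive: -/
theorem isIso_of_retraction_of_indec {X Z : C} (hZ : Indecomposable Z) (hX : ¬IsZero X)
    (u : X ⟶ Z) (ρ : Z ⟶ X) (h : u ≫ ρ = 𝟙 X) : IsIso u := by
  rcases hZ.2 _ _ (splitIso u ρ h) with h1 | h2
  · exact absurd h1 hX
  · have : IsIso (biprod.inl : X ⟶ X ⊞ kernel ρ) := isIso_inl_of_isZero h2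
    have heq : u = biprod.inl ≫ (splitIso u ρ h).inv := by
      rw [← comp_splitIso_hom u ρ h, Category.assoc, Iso.hom_inv_id, Category.comp_id]
    rw [heq]
    infer_instance

theorem summand_of_retraction {X Y : C} (u : X ⟶ Y) (ρ : Y ⟶ X) (h : u ≫ ρ = 𝟙 X) :
    ∃ Z : C, Nonempty (Y ≅ X ⊞ Z) :=
  ⟨kernel ρ, ⟨splitIso u ρ h⟩⟩

theorem indec_of_iso {A B : C} (e : A ≅ B) (h : Indecomposable A) : Indecomposable B :=
  ⟨fun hz => h.1 (hz.of_iso e), fun Y Z i => h.2 Y Z (e.trans i)⟩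

/-- biproduct over `PUnit` -/
noncomputable def biproductPUnitIso (F : PUnit → C) : (⨁ F) ≅ F PUnit.unit where
  hom := biproduct.π F PUnit.unit
  inv := biproduct.lift (fun _ => 𝟙 _)
  hom_inv_id := by
    apply biproduct.hom_ext
    intro j
    cases j
    rw [Category.assoc, biproduct.lift_π, Category.comp_id, Category.id_comp]
  inv_hom_id := by rw [biproduct.lift_π]

theorem isZero_biproduct_pempty (F : PEmpty → C) : IsZero (⨁ F) := by
  rw [IsZero.iff_id_eq_zero]
  apply biproduct.hom_ext
  intro j
  exact j.elim

/-- biproduct over a sum type -/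
noncomputable def biproductSumIso {J K : Type} [Fintype J] [Fintype K] (F : J → C) (G : K → C) :
    (⨁ F) ⊞ (⨁ G) ≅ ⨁ (Sum.elim F G) where
  hom := biprod.desc
    (biproduct.lift (fun s => Sum.casesOn s (fun j => (biproduct.π F j : (⨁ F) ⟶ F j))
      (fun _ => 0)))
    (biproduct.lift (fun s => Sum.casesOn s (fun _ => 0)
      (fun k => (biproduct.π G k : (⨁ G) ⟶ G k))))
  inv := biprod.lift (biproduct.lift fun j => biproduct.π (Sum.elim F G) (Sum.inl j))
    (biproduct.lift fun k => biproduct.π (Sum.elim F G) (Sum.inr k))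
  hom_inv_id := by
    apply biprod.hom_ext' <;> apply biprod.hom_ext <;>
      simp <;> apply biproduct.hom_ext <;> intro j <;> simp <;> erw [biproduct.lift_π] <;> exact biproduct.lift_π (f := Sum.elim F G) _ _
  inv_hom_id := by
    apply biproduct.hom_ext _ _ (fun s => ?_)
    rw [Category.assoc, biprod.desc_eq, Preadditive.add_comp, Category.assoc, Category.assoc,
      biproduct.lift_π, biproduct.lift_π, Preadditive.comp_add, biprod.lift_fst_assoc,
      biprod.lift_snd_assoc, Category.id_comp]
    cases s
    · dsimp only
      rw [comp_zero, add_zero]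
      exact biproduct.lift_π (f := F) _ _
    · dsimp only
      rw [comp_zero, zero_add]
      exact biproduct.lift_π (f := G) _ _

section Decomp

variable (len : C → ℕ) (hlen : ∀ Z : C, ObjLength Z (len Z))

include hlen in
theorem len_summand_lt {M Y Z : C} (e : M ≅ Y ⊞ Z) (hY : ¬IsZero Y) (hZ : ¬IsZero Z) :
    len Y < len M := by
  have hm : Mono (biprod.inl ≫ e.inv : Y ⟶ M) := mono_comp _ _
  have hle : len Y ≤ len M := len_mono_le len hlen (biprod.inl ≫ e.inv)
  rcases lt_or_eq_of_le hle with h | h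
  · exact h
  · exfalso
    have : IsIso (biprod.inl ≫ e.inv : Y ⟶ M) := isIso_of_mono_of_len_eq len hlen _ h
    have h2 : IsIso (biprod.inl : Y ⟶ Y ⊞ Z) := by
      have heq : (biprod.inl : Y ⟶ Y ⊞ Z) = (biprod.inl ≫ e.inv) ≫ e.hom := by
        rw [Category.assoc, Iso.inv_hom_id, Category.comp_id]
      rw [heq]; infer_instance
    exact hZ (isZero_snd_of_isIso_inl h2)

include hlen in
theorem len_summand_lt' {M Y Z : C} (e : M ≅ Y ⊞ Z) (hY : ¬IsZero Y) (hZ : ¬IsZero Z) :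
    len Z < len M := by
  have hle : len Z ≤ len M := len_mono_le len hlen (biprod.inr ≫ e.inv)
  rcases lt_or_eq_of_le hle with h | h
  · exact h
  · exfalso
    have : IsIso (biprod.inr ≫ e.inv : Z ⟶ M) := isIso_of_mono_of_len_eq len hlen _ h
    have h2 : IsIso (biprod.inr : Z ⟶ Y ⊞ Z) := by
      have heq : (biprod.inr : Z ⟶ Y ⊞ Z) = (biprod.inr ≫ e.inv) ≫ e.hom := by
        rw [Category.assoc, Iso.inv_hom_id, Category.comp_id]
      rw [heq]; infer_instance
    exact hY (isZero_fst_of_isIso_inr h2)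

include hlen in
theorem exists_indec_decomp (M : C) :
    ∃ (J : Type) (_ : Fintype J) (F : J → C),
      (∀ j, Indecomposable (F j)) ∧ Nonempty (M ≅ ⨁ F) := by
  generalize hn : len M = n
  induction n using Nat.strong_induction_on generalizing M with
  | _ n ih =>
  subst hn
  by_cases hz : IsZero M
  · exact ⟨PEmpty, inferInstance, PEmpty.elim, fun j => j.elim,
      ⟨hz.iso (isZero_biproduct_pempty _)⟩⟩
  by_cases hi : Indecomposable M
  · exact ⟨PUnit, inferInstance, fun _ => M, fun _ => hi, ⟨(biproductPUnitIso (fun _ : PUnit => M)).symm⟩⟩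
  -- M is nonzero and decomposable
  have hdec : ∃ (Y Z : C), Nonempty (M ≅ Y ⊞ Z) ∧ ¬IsZero Y ∧ ¬IsZero Z := by
    by_contra hc
    push_neg at hc
    apply hi
    refine ⟨hz, fun Y Z e => ?_⟩
    by_contra h
    push_neg at h
    exact h.2 (hc Y Z ⟨e⟩ h.1)
  obtain ⟨Y, Z, ⟨e⟩, hY, hZ⟩ := hdec
  have hYlt : len Y < len M := len_summand_lt len hlen e hY hZ
  have hZlt : len Z < len M := len_summand_lt' len hlen e hY hZ
  obtain ⟨J1, i1, F1, hF1, ⟨e1⟩⟩ := ih (len Y) hYlt Y rfl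
  obtain ⟨J2, i2, F2, hF2, ⟨e2⟩⟩ := ih (len Z) hZlt Z rfl
  refine ⟨J1 ⊕ J2, inferInstance, Sum.elim F1 F2, fun s => ?_, ?_⟩
  · cases s with
    | inl j => exact hF1 j
    | inr k => exact hF2 k
  · exact ⟨e.trans ((biprod.mapIso e1 e2).trans (biproductSumIso F1 F2))⟩

end Decomp

theorem lexLE_empty (B : Finset ℕ) : lexLE ∅ B := by
  unfold lexLE; simp

theorem isZero_of_mono_zero {A B : C} (h : Mono (0 : A ⟶ B)) : IsZero A := by
  rw [IsZero.iff_id_eq_zero]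
  have : 𝟙 A ≫ (0 : A ⟶ B) = 0 ≫ (0 : A ⟶ B) := by simp
  exact (cancel_mono (0 : A ⟶ B)).1 this

section GR

variable (len : C → ℕ) (hlen : ∀ Z : C, ObjLength Z (len Z))
variable (mu : C → Finset ℕ) (hmu : IsGRMeasure len mu)

include hlen in
theorem hom_eq_zero_of_len_le_one {Z Y : C} (g : Z ⟶ Y) (h1 : len Z ≤ 1) (h : ¬Mono g) :
    g = 0 := by
  have hKbot : kernelSubobject g ≠ ⊥ := by
    intro hc
    apply h
    have : kernel.ι g = 0 := by
      exact Subobject.mk_eq_bot_iff_zero.1 (by rw [← hc])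
    exact Preadditive.mono_of_kernel_zero this
  have hKtop : kernelSubobject g = ⊤ := by
    by_contra hc
    have hlt := len_subobject_lt len hlen (kernelSubobject g : Subobject Z) hc
    have h0 : len ((kernelSubobject g : Subobject Z) : C) = 0 := by omega
    have hz := (len_eq_zero_iff len hlen).1 h0
    exact hKbot ((subobject_isZero_iff_bot _).1 hz)
  have harr := kernelSubobject_arrow_comp g
  rw [hKtop] at harr
  have : g = inv ((⊤ : Subobject Z).arrow) ≫ ((⊤ : Subobject Z).arrow ≫ g) := by
    rw [IsIso.inv_hom_id_assoc]
  rw [this, harr, comp_zero]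

include hlen in
theorem chainVal_push {A B : C} (f : A ⟶ B) [Mono f] (hB : Indecomposable B)
    {S : Finset ℕ} (h : IsGRChainVal len A S) : IsGRChainVal len B (S ∪ {len B}) := by
  classical
  obtain ⟨s, hchain, htop, hindec, hval⟩ := h
  refine ⟨s.image (pushMk f) ∪ {⊤}, ?_, ?_, ?_, ?_⟩
  · intro x hx y hy hne
    simp only [Finset.coe_union, Set.mem_union, Finset.mem_coe, Finset.mem_union,
      Finset.mem_image, Finset.coe_singleton, Set.mem_singleton_iff, Finset.mem_singleton] at hx hy
    rcases hx with (⟨a, ha, rfl⟩ | rfl)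
    · rcases hy with (⟨b, hb, rfl⟩ | rfl)
      · by_cases hab : a = b
        · subst hab; exact absurd rfl hne
        · rcases hchain ha hb hab with h | h
          · exact Or.inl ((pushMk_le_iff f a b).2 h)
          · exact Or.inr ((pushMk_le_iff f b a).2 h)
      · exact Or.inl le_top
    · exact Or.inr le_top
  · exact Finset.mem_union_right _ (Finset.mem_singleton_self _)
  · intro t ht
    rcases Finset.mem_union.1 ht with ht | ht
    · obtain ⟨a, ha, rfl⟩ := Finset.mem_image.1 ht
      exact indec_of_iso (Subobject.underlyingIso _).symm (hindec a ha)
    · rw [Finset.mem_singleton] at ht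
      subst ht
      exact indec_of_iso (asIso ((⊤ : Subobject B).arrow)).symm hB
  · rw [Finset.image_union, Finset.image_image, Finset.image_singleton]
    congr 1
    · rw [← hval]
      apply Finset.image_congr
      intro a _
      exact len_mk_eq len hlen (a.arrow ≫ f)
    · rw [len_top len hlen]

include hlen hmu in
theorem mem_mu_len_le {W : C} (hW : Indecomposable W) {x : ℕ} (hx : x ∈ mu W) : x ≤ len W := by
  obtain ⟨s, hchain, htop, hindec, hval⟩ := (hmu W hW).1
  rw [← hval] at hx
  obtain ⟨t, ht, rfl⟩ := Finset.mem_image.1 hx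
  exact len_subobject_le len hlen t

include hlen hmu in
theorem len_mem_mu {W : C} (hW : Indecomposable W) : len W ∈ mu W := by
  obtain ⟨s, hchain, htop, hindec, hval⟩ := (hmu W hW).1
  rw [← hval]
  rw [Finset.mem_image]
  exact ⟨⊤, htop, len_top len hlen⟩

include hlen hmu in
theorem mu_le_of_mono {A B : C} (f : A ⟶ B) [Mono f] (hA : Indecomposable A)
    (hB : Indecomposable B) : lexLE (mu A) (mu B) := by
  have h1 := chainVal_push len hlen f hB (hmu A hA).1
  exact lexLE_trans (lexLE_union (mu A) {len B}) ((hmu B hB).2 _ h1)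

include hlen hmu in
theorem mu_iso_eq {A B : C} (e : A ≅ B) (hA : Indecomposable A) (hB : Indecomposable B) :
    mu A = mu B :=
  lexLE_antisymm (mu_le_of_mono len hlen mu hmu e.hom hA hB)
    (mu_le_of_mono len hlen mu hmu e.inv hB hA)

include hlen hmu in
theorem len_eq_of_mu_eq {A B : C} (hA : Indecomposable A) (hB : Indecomposable B)
    (h : mu A = mu B) : len A = len B :=
  le_antisymm (mem_mu_len_le len hlen mu hmu hB (h ▸ len_mem_mu len hlen mu hmu hA))
    (mem_mu_len_le len hlen mu hmu hA (h.symm ▸ len_mem_mu len hlen mu hmu hB))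

include hlen in
theorem chainVal_restrict {B : C} (t : Subobject B) (s : Finset (Subobject B))
    (hchain : IsChain (· ≤ ·) (s : Set (Subobject B))) (hmem : t ∈ s)
    (hle : ∀ u ∈ s, u ≤ t)
    (hindec : ∀ u ∈ s, Indecomposable ((u : Subobject B) : C)) :
    IsGRChainVal len ((t : Subobject B) : C)
      (s.image (fun u : Subobject B => len ((u : Subobject B) : C))) := by
  classical
  set ψ : Subobject B → Subobject ((t : Subobject B) : C) := fun u =>
    if h : u ≤ t then Subobject.mk (Subobject.ofLE u t h) else ⊤ with hψ
  have hψval : ∀ u (hu : u ∈ s), ψ u = Subobject.mk (Subobject.ofLE u t (hle u hu)) := by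
    intro u hu
    rw [hψ]
    simp only [dif_pos (hle u hu)]
  refine ⟨s.image ψ, ?_, ?_, ?_, ?_⟩
  · intro x hx y hy hne
    simp only [Finset.coe_image, Set.mem_image, Finset.mem_coe] at hx hy
    obtain ⟨a, ha, rfl⟩ := hx
    obtain ⟨b, hb, rfl⟩ := hy
    by_cases hab : a = b
    · subst hab; exact absurd rfl hne
    have key : ∀ u v, u ∈ s → v ∈ s → u ≤ v → ψ u ≤ ψ v := by
      intro u v hu hv huv
      rw [hψval u hu, hψval v hv]
      apply Subobject.mk_le_mk_of_comm (Subobject.ofLE u v huv)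
      rw [Subobject.ofLE_comp_ofLE]
    rcases hchain ha hb hab with h | h
    · exact Or.inl (key a b ha hb h)
    · exact Or.inr (key b a hb ha h)
  · rw [Finset.mem_image]
    refine ⟨t, hmem, ?_⟩
    rw [hψval t hmem]
    have : IsIso (Subobject.ofLE t t (hle t hmem)) := by
      rw [Subobject.ofLE_refl t]
      infer_instance
    exact Subobject.mk_eq_top_of_isIso _
  · intro u hu
    obtain ⟨a, ha, rfl⟩ := Finset.mem_image.1 hu
    rw [hψval a ha]
    exact indec_of_iso (Subobject.underlyingIso _).symm (hindec a ha)
  · rw [Finset.image_image]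
    apply Finset.image_congr
    intro a ha
    show len ((ψ a : Subobject _) : C) = len ((a : Subobject B) : C)
    rw [hψval a ha]
    exact len_mk_eq len hlen _

include hlen in
theorem exists_proper_indec {Z : C} (h2 : 2 ≤ len Z) :
    ∃ t : Subobject Z, t ≠ ⊤ ∧ t ≠ ⊥ ∧ Indecomposable ((t : Subobject Z) : C) := by
  classical
  have hex : ∃ n, ∃ t : Subobject Z, t ≠ ⊥ ∧ t ≠ ⊤ ∧ len ((t : Subobject Z) : C) = n := by
    obtain ⟨f, hf, hbot, htop⟩ := (hlen Z).1
    have h01 : f 0 < f ⟨1, by omega⟩ := hf (by simp [Fin.lt_iff_val_lt_val])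
    have h1l : f ⟨1, by omega⟩ < f (Fin.last (len Z)) := hf (by
      simp [Fin.lt_iff_val_lt_val, Fin.last]; omega)
    refine ⟨len ((f ⟨1, by omega⟩ : Subobject Z) : C), f ⟨1, by omega⟩, ?_, ?_, rfl⟩
    · rw [← hbot]; exact (ne_of_lt h01).symm
    · rw [← htop]; exact ne_of_lt h1l
  obtain ⟨t, htbot, httop, htlen⟩ := Nat.find_spec hex
  refine ⟨t, httop, htbot, ?_⟩
  constructor
  · intro hz
    exact htbot ((subobject_isZero_iff_bot _).1 hz)
  · intro Y W e
    by_contra hc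
    push_neg at hc
    obtain ⟨hY, hW⟩ := hc
    have hYlt : len Y < len ((t : Subobject Z) : C) := len_summand_lt len hlen e hY hW
    have hmono : Mono (biprod.inl ≫ e.inv ≫ t.arrow) := mono_comp _ _
    set u : Subobject Z := Subobject.mk (biprod.inl ≫ e.inv ≫ t.arrow) with hu
    have hulen : len ((u : Subobject Z) : C) = len Y := len_mk_eq len hlen _
    have hubot : u ≠ ⊥ := by
      intro hub
      apply hY
      have : IsZero ((u : Subobject Z) : C) := (subobject_isZero_iff_bot u).2 hub
      exact this.of_iso (Subobject.underlyingIso _).symm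
    have hutop : u ≠ ⊤ := by
      intro hut
      have h1 : len ((u : Subobject Z) : C) = len Z := by rw [hut, len_top len hlen]
      have h3 : len ((t : Subobject Z) : C) ≤ len Z := len_subobject_le len hlen t
      omega
    have := Nat.find_min hex (m := len Y) (by omega) 
    exact this ⟨u, hubot, hutop, hulen⟩

include hlen hmu in
theorem exists_gr_sub {Z : C} (hZ : Indecomposable Z) (h2 : 2 ≤ len Z) :
    ∃ t : Subobject Z, t ≠ ⊤ ∧ Indecomposable ((t : Subobject Z) : C) ∧
      (∀ u : Subobject Z, u ≠ ⊤ → Indecomposable ((u : Subobject Z) : C) →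
        lexLE (mu ((u : Subobject Z) : C)) (mu ((t : Subobject Z) : C))) ∧
      mu Z = mu ((t : Subobject Z) : C) ∪ {len Z} := by
  classical
  obtain ⟨t₀, ht₀top, ht₀bot, ht₀indec⟩ := exists_proper_indec len hlen h2
  set Vals : Finset (Finset ℕ) := ((Finset.range (len Z + 1)).powerset).filter
    (fun A => ∃ u : Subobject Z, u ≠ ⊤ ∧ Indecomposable ((u : Subobject Z) : C) ∧
      mu ((u : Subobject Z) : C) = A) with hVals
  have hmemVals : ∀ u : Subobject Z, u ≠ ⊤ → Indecomposable ((u : Subobject Z) : C) →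
      mu ((u : Subobject Z) : C) ∈ Vals := by
    intro u hu hind
    rw [hVals, Finset.mem_filter, Finset.mem_powerset]
    refine ⟨fun x hx => Finset.mem_range.2 ?_, u, hu, hind, rfl⟩
    have h1 := mem_mu_len_le len hlen mu hmu hind hx
    have h3 := len_subobject_le len hlen u
    omega
  have hne : Vals.Nonempty := ⟨_, hmemVals t₀ ht₀top ht₀indec⟩
  obtain ⟨Astar, hAmem, hAmax⟩ := exists_rel_max lexLE (fun _ _ _ => lexLE_trans) Vals hne
    (fun a _ b _ => lexLE_total a b)
  obtain ⟨t, httop, htindec, htmu⟩ := (Finset.mem_filter.1 hAmem).2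
  have hmax : ∀ u : Subobject Z, u ≠ ⊤ → Indecomposable ((u : Subobject Z) : C) →
      lexLE (mu ((u : Subobject Z) : C)) (mu ((t : Subobject Z) : C)) := by
    intro u hu hind
    rw [htmu]
    exact hAmax _ (hmemVals u hu hind)
  refine ⟨t, httop, htindec, hmax, ?_⟩
  have hmutlt : ∀ x ∈ mu ((t : Subobject Z) : C), x < len Z := by
    intro x hx
    have h1 := mem_mu_len_le len hlen mu hmu htindec hx
    have h3 := len_subobject_lt len hlen t httop
    omega
  apply lexLE_antisymm
  · -- mu Z ≤ mu t ∪ {len Z}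
    obtain ⟨s, hchain, hstop, hsindec, hsval⟩ := (hmu Z hZ).1
    set s₀ := s.erase ⊤ with hs₀
    have hsplit : mu Z = s₀.image (fun u : Subobject Z => len ((u : Subobject Z) : C))
        ∪ {len Z} := by
      rw [← hsval]
      have : s = insert ⊤ s₀ := (Finset.insert_erase hstop).symm
      rw [this, Finset.image_insert, len_top len hlen]
      rw [Finset.insert_eq, Finset.union_comm]
    have hs₀lt : ∀ x ∈ s₀.image (fun u : Subobject Z => len ((u : Subobject Z) : C)),
        x < len Z := by
      intro x hx
      obtain ⟨a, ha, rfl⟩ := Finset.mem_image.1 hx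
      have h1 := len_subobject_lt len hlen a (Finset.mem_erase.1 ha).1
      omega
    rw [hsplit]
    have hcore : lexLE (s₀.image (fun u : Subobject Z => len ((u : Subobject Z) : C)))
        (mu ((t : Subobject Z) : C)) := by
      rcases Finset.eq_empty_or_nonempty s₀ with h0 | h0
      · rw [h0, Finset.image_empty]; exact lexLE_empty _
      · obtain ⟨T₀, hT₀mem, hT₀max⟩ := exists_rel_max (α := Subobject Z) (· ≤ ·)
          (fun _ _ _ => le_trans) s₀ h0
          (fun a ha b hb => by
            by_cases hab : a = b
            · exact Or.inl (hab.le)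
            · exact hchain (Finset.mem_coe.2 (Finset.mem_of_mem_erase ha))
                (Finset.mem_coe.2 (Finset.mem_of_mem_erase hb)) hab)
        have hsub : (s₀ : Set (Subobject Z)) ⊆ (s : Set (Subobject Z)) := by
          intro x hx
          exact Finset.mem_coe.2 (Finset.mem_of_mem_erase (Finset.mem_coe.1 hx))
        have hres := chainVal_restrict len hlen T₀ s₀ (hchain.mono hsub) hT₀mem hT₀max
          (fun u hu => hsindec u (Finset.mem_of_mem_erase hu))
        have hT₀indec := hsindec T₀ (Finset.mem_of_mem_erase hT₀mem)
        have h1 := (hmu _ hT₀indec).2 _ hres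
        have h2 := hmax T₀ (Finset.mem_erase.1 hT₀mem).1 hT₀indec
        exact lexLE_trans h1 h2
    exact lexLE_union_singleton hcore hs₀lt hmutlt
  · -- mu t ∪ {len Z} ≤ mu Z
    have h1 := chainVal_push len hlen t.arrow hZ (hmu _ htindec).1
    exact (hmu Z hZ).2 _ h1

end GR

section Crux

variable (len : C → ℕ) (hlen : ∀ Z : C, ObjLength Z (len Z))
variable (mu : C → Finset ℕ) (hmu : IsGRMeasure len mu)

theorem isZero_biproduct_isEmpty {J : Type} [Fintype J] [IsEmpty J] (F : J → C) :
    IsZero (⨁ F) := by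
  rw [IsZero.iff_id_eq_zero]
  apply biproduct.hom_ext
  intro j
  exact isEmptyElim j

include hlen hmu in
theorem cruxAux
    (N : ℕ)
    (ihmain : ∀ (W : C), Indecomposable W → len W < N →
      ∀ (J : Type) (_ : Fintype J) (Ys : J → C), (∀ j, Indecomposable (Ys j)) →
      ∀ (u : W ⟶ ⨁ Ys), Mono u →
      ∀ (k : J), (∀ i, lexLE (mu (Ys i)) (mu (Ys k))) →
        lexLE (mu W) (mu (Ys k)) ∧
        (mu W = mu (Ys k) → ∃ ρ : (⨁ Ys) ⟶ W, u ≫ ρ = 𝟙 W)) :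
    ∀ (m : ℕ) (Z : C), Indecomposable Z → len Z ≤ m → len Z ≤ N →
    ∀ (J : Type) (_ : Fintype J) (Ys : J → C), (∀ j, Indecomposable (Ys j)) →
    ∀ (w : Z ⟶ ⨁ Ys), Mono w →
    ∀ (T : Finset ℕ), (∀ x ∈ T, len Z < x) →
    (∀ i, lexLE (mu (Ys i)) (mu Z ∪ T)) →
    ∃ i, Mono (w ≫ biproduct.π Ys i) := by
  intro m
  induction m with
  | zero =>
    intro Z hZ hZm _ _ _ _ _ _ _ _ _ _
    exfalso
    exact hZ.1 ((len_eq_zero_iff len hlen).1 (Nat.le_zero.1 hZm))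
  | succ m ihm =>
    intro Z hZ hZm hZN J iJ Ys hYs w hw T hT hinv
    by_contra hno
    push_neg at hno
    have hno' : ∀ i, ¬ Mono (w ≫ biproduct.π Ys i) := by
      intro i hmono
      exact (hno i) hmono
    by_cases hlen1 : len Z ≤ 1
    · -- Z is simple or zero; all components vanish
      have hzero : ∀ i, w ≫ biproduct.π Ys i = 0 := fun i =>
        hom_eq_zero_of_len_le_one len hlen _ hlen1 (hno' i)
      have hw0 : w = 0 := by
        apply biproduct.hom_ext
        intro j
        rw [hzero j, zero_comp]
      have : Mono (0 : Z ⟶ ⨁ Ys) := by rw [← hw0]; exact hw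
      exact hZ.1 (isZero_of_mono_zero this)
    · push_neg at hlen1
      have h2 : 2 ≤ len Z := hlen1
      obtain ⟨t, httop, htindec, htmax, htmu⟩ := exists_gr_sub len hlen mu hmu hZ h2
      have htlt : len ((t : Subobject Z) : C) < len Z := by
        have := len_subobject_lt len hlen t httop
        omega
      -- recursive step: some component is mono on t
      have hrec : ∃ i, Mono ((t.arrow ≫ w) ≫ biproduct.π Ys i) := by
        apply ihm ((t : Subobject Z) : C) htindec (by omega) (by omega) J iJ Ys hYs
          (t.arrow ≫ w) (mono_comp _ _) (T ∪ {len Z})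
        · intro x hx
          rcases Finset.mem_union.1 hx with hx | hx
          · exact lt_trans htlt (hT x hx)
          · rw [Finset.mem_singleton] at hx
            omega
        · intro i
          have h1 := hinv i
          rw [htmu] at h1
          rw [Finset.union_assoc, Finset.union_comm {len Z} T] at h1
          exact h1
      obtain ⟨i, hi⟩ := hrec
      -- the Case A argument
      set g : Z ⟶ Ys i := w ≫ biproduct.π Ys i with hg
      have hgnm : ¬Mono g := hno' i
      have hιg : Mono (t.arrow ≫ g) := by
        rw [hg, ← Category.assoc]
        exact hi
      have hfac : factorThruImage g ≫ image.ι g = g := image.fac g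
      have hιe : Mono (t.arrow ≫ factorThruImage g) := by
        have : Mono ((t.arrow ≫ factorThruImage g) ≫ image.ι g) := by
          rw [Category.assoc, hfac]
          exact hιg
        exact mono_of_mono _ (image.ι g)
      have henm : ¬Mono (factorThruImage g) := by
        intro hm
        apply hgnm
        rw [← hfac]
        exact mono_comp _ _
      have hlenIm : len (image g) + 1 ≤ len Z :=
        len_lt_of_epi_not_mono len hlen (factorThruImage g) henm
      obtain ⟨J', iJ', Ms, hMs, ⟨eM⟩⟩ := exists_indec_decomp len hlen (image g)
      haveI := iJ'
      have htnz : ¬IsZero ((t : Subobject Z) : C) := htindec.1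
      have hImnz : ¬IsZero (⨁ Ms) := by
        intro hz
        apply htnz
        apply isZero_of_mono_zero (B := ⨁ Ms)
        have h0 : (t.arrow ≫ factorThruImage g) ≫ eM.hom = 0 := hz.eq_of_tgt _ _
        have : Mono ((t.arrow ≫ factorThruImage g) ≫ eM.hom) := mono_comp _ _
        rw [h0] at this
        exact this
      have hJne : Nonempty J' := by
        by_contra hne
        haveI : IsEmpty J' := not_nonempty_iff.1 hne
        exact hImnz (isZero_biproduct_isEmpty Ms)
      -- pick the index with maximal measure
      obtain ⟨k', -, hk'⟩ := exists_rel_max (α := J')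
        (fun a b => lexLE (mu (Ms a)) (mu (Ms b)))
        (fun _ _ _ => lexLE_trans) Finset.univ
        (Finset.univ_nonempty_iff.2 hJne)
        (fun a _ b _ => lexLE_total _ _)
      have hk'max : ∀ j, lexLE (mu (Ms j)) (mu (Ms k')) := fun j =>
        hk' j (Finset.mem_univ j)
      -- each Ms j is ≤ mu t by the sandwich lemma
      have hsandwich : ∀ j, lexLE (mu (Ms j)) (mu ((t : Subobject Z) : C)) := by
        intro j
        have hmj : Mono (biproduct.ι Ms j ≫ eM.inv ≫ image.ι g) := mono_comp _ _
        have h1 : lexLE (mu (Ms j)) (mu (Ys i)) :=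
          mu_le_of_mono len hlen mu hmu (biproduct.ι Ms j ≫ eM.inv ≫ image.ι g)
            (hMs j) (hYs i)
        have h2 : lexLE (mu (Ys i)) (mu ((t : Subobject Z) : C) ∪ (T ∪ {len Z})) := by
          have h3 := hinv i
          rw [htmu, Finset.union_assoc, Finset.union_comm {len Z} T] at h3
          exact h3
        have h4 := lexLE_trans h1 h2
        apply lexLE_sandwich (c := len Z) h4
        · intro x hx
          have := mem_mu_len_le len hlen mu hmu htindec hx
          omega
        · intro x hx
          have hx1 := mem_mu_len_le len hlen mu hmu (hMs j) hx
          have hx2 : len (Ms j) ≤ len (⨁ Ms) :=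
            len_mono_le len hlen (biproduct.ι Ms j)
          have hx3 : len (⨁ Ms) = len (image g) := (len_iso len hlen eM).symm
          omega
        · intro x hx
          rcases Finset.mem_union.1 hx with hx | hx
          · exact le_of_lt (hT x hx)
          · rw [Finset.mem_singleton] at hx
            omega
      -- apply the main induction hypothesis to t ↪ ⨁ Ms
      have hmono2 : Mono ((t.arrow ≫ factorThruImage g) ≫ eM.hom) := mono_comp _ _
      obtain ⟨hle, hsplit⟩ := ihmain ((t : Subobject Z) : C) htindec (by omega)
        J' iJ' Ms hMs ((t.arrow ≫ factorThruImage g) ≫ eM.hom) hmono2 k' hk'max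
      have heq : mu ((t : Subobject Z) : C) = mu (Ms k') :=
        lexLE_antisymm hle (hsandwich k')
      obtain ⟨ρ, hρ⟩ := hsplit heq
      -- build a retraction of t in Z
      have hret : t.arrow ≫ (factorThruImage g ≫ eM.hom ≫ ρ) = 𝟙 _ := by
        rw [← hρ]
        simp only [Category.assoc]
      have hiso : IsIso t.arrow :=
        isIso_of_retraction_of_indec hZ htnz t.arrow _ hret
      exact httop (Subobject.isIso_arrow_iff_eq_top t |>.1 hiso)

end Crux

section Main

variable (len : C → ℕ) (hlen : ∀ Z : C, ObjLength Z (len Z))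
variable (mu : C → Finset ℕ) (hmu : IsGRMeasure len mu)

include hlen hmu in
theorem mainThm : ∀ (N : ℕ) (X : C), Indecomposable X → len X ≤ N →
    ∀ (J : Type) (_ : Fintype J) (Ys : J → C), (∀ j, Indecomposable (Ys j)) →
    ∀ (u : X ⟶ ⨁ Ys), Mono u →
    ∀ (k : J), (∀ i, lexLE (mu (Ys i)) (mu (Ys k))) →
      lexLE (mu X) (mu (Ys k)) ∧
      (mu X = mu (Ys k) → ∃ ρ : (⨁ Ys) ⟶ X, u ≫ ρ = 𝟙 X) := by
  intro N
  induction N with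
  | zero =>
    intro X hX hlenX
    exact absurd ((len_eq_zero_iff len hlen).1 (Nat.le_zero.1 hlenX)) hX.1
  | succ N ihN =>
    intro X hX hlenX J iJ Ys hYs u hu k hk
    rcases Nat.lt_succ_iff_lt_or_eq.1 (Nat.lt_succ_of_le hlenX) with hlt | heq
    · exact ihN X hX (Nat.lt_succ_iff.1 hlt) J iJ Ys hYs u hu k hk
    · have hcrux : (∀ i, lexLE (mu (Ys i)) (mu X)) →
          ∃ i, Mono (u ≫ biproduct.π Ys i) := by
        intro hinv
        apply cruxAux len hlen mu hmu (N + 1)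
          (fun W hW hWlt => ihN W hW (Nat.lt_succ_iff.1 hWlt))
          (len X) X hX le_rfl (by omega) J iJ Ys hYs u hu ∅ (by simp)
        intro i
        rw [Finset.union_empty]
        exact hinv i
      have parta : lexLE (mu X) (mu (Ys k)) := by
        by_contra hc
        have h2 : lexLE (mu (Ys k)) (mu X) := (lexLE_total _ _).resolve_left hc
        obtain ⟨i, hi⟩ := hcrux (fun i => lexLE_trans (hk i) h2)
        haveI := hi
        have h3 : lexLE (mu X) (mu (Ys i)) :=
          mu_le_of_mono len hlen mu hmu (u ≫ biproduct.π Ys i) hX (hYs i)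
        exact hc (lexLE_trans h3 (hk i))
      refine ⟨parta, fun hmueq => ?_⟩
      obtain ⟨i, hi⟩ := hcrux (fun i => hmueq ▸ hk i)
      haveI := hi
      have h1 : lexLE (mu X) (mu (Ys i)) :=
        mu_le_of_mono len hlen mu hmu (u ≫ biproduct.π Ys i) hX (hYs i)
      have h2 : mu X = mu (Ys i) :=
        lexLE_antisymm h1 (lexLE_trans (hk i) (hmueq ▸ lexLE_refl (mu X)))
      have hleneq : len X = len (Ys i) := len_eq_of_mu_eq len hlen mu hmu hX (hYs i) h2
      have hiso : IsIso (u ≫ biproduct.π Ys i) :=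
        isIso_of_mono_of_len_eq len hlen _ hleneq
      refine ⟨biproduct.π Ys i ≫ inv (u ≫ biproduct.π Ys i), ?_⟩
      rw [← Category.assoc, IsIso.hom_inv_id]

end Main

end GRaux

/-- (GR8), Gabriel's main property: if `X` is indecomposable and
`X ⊆ Y = Y₁ ⊕ ... ⊕ Yᵣ` with all `Yᵢ` indecomposable, then
`μ(X) ≤ max_i μ(Yᵢ)`; moreover if `μ(X) = max_i μ(Yᵢ)` then `X` is a
direct summand of `Y`. -/
theorem grMeasure_main_property
    (len : C → ℕ) (hlen : ∀ Z : C, ObjLength Z (len Z))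
    (mu : C → Finset ℕ) (hmu : IsGRMeasure len mu)
    (X : C) (hX : Indecomposable X)
    (r : ℕ) (Ys : Fin r → C) (hYs : ∀ i, Indecomposable (Ys i))
    (f : X ⟶ ⨁ Ys) (hf : Mono f)
    (k : Fin r) (hk : ∀ i, lexLE (mu (Ys i)) (mu (Ys k))) :
    lexLE (mu X) (mu (Ys k)) ∧
    (mu X = mu (Ys k) → ∃ Z : C, Nonempty ((⨁ Ys) ≅ X ⊞ Z)) := by
  obtain ⟨h1, h2⟩ := GRaux.mainThm len hlen mu hmu (len X) X hX le_rfl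
    (Fin r) inferInstance Ys hYs f hf k hk
  refine ⟨h1, fun heq => ?_⟩
  obtain ⟨ρ, hρ⟩ := h2 heq
  exact GRaux.summand_of_retraction f ρ hρ
end
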